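/- arXiv:2002.07117 — 7 statements merged into one kernel-verified Lean document; each statement's English description precedes it below -/
import Mathlib

section
/- Let ξ be a real random variable with E[|ξ|^k] < ∞ for a fixed integer k ≥ 1, and let φ(u) = E[e^{iuξ}] be its characteristic function. Let α > 0, Δ > 0 and j ∈ ℕ, and define K₁(u) = ∫_{jΔ}^{(j+1)Δ} φ( u e^{−α((j+1)Δ − s)} ) ds for u ∈ ℝ. Then K₁ is k times differentiable at 0 and its k-th derivative at 0 is K₁^{(k)}(0) = i^k E[ξ^k] (1 − e^{−kαΔ})/(kα). -/
open MeasureTheory Complex Metric Set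

namespace K1Aux

noncomputable def F (c : ℝ → ℝ) (a b : ℝ) (n : ℕ) (x : ℝ) : ℂ :=
  ∫ s in Set.Ioc a b, (Complex.I * c s) ^ n * Complex.exp (Complex.I * x * c s)

lemma finMeas (a b : ℝ) : IsFiniteMeasure (volume.restrict (Set.Ioc a b)) :=
  ⟨by rw [Measure.restrict_apply_univ]; simp [Real.volume_Ioc]⟩

lemma contF {c : ℝ → ℝ} (hc : Continuous c) (n : ℕ) (x : ℝ) :
    Continuous fun s => (Complex.I * c s) ^ n * Complex.exp (Complex.I * x * c s) := by
  have h1 : Continuous fun s => (c s : ℂ) := Complex.continuous_ofReal.comp hc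
  exact ((continuous_const.mul h1).pow n).mul ((continuous_const.mul h1).cexp)

lemma norm_integrand {cs : ℝ} (n : ℕ) (x : ℝ) :
    ‖(Complex.I * cs) ^ n * Complex.exp (Complex.I * x * cs)‖ = |cs| ^ n := by
  rw [norm_mul, norm_pow, norm_mul]
  simp [Complex.norm_exp]

lemma ptDeriv (c : ℝ → ℝ) (s : ℝ) (n : ℕ) (x : ℝ) :
    HasDerivAt (fun x : ℝ => (Complex.I * c s) ^ n * Complex.exp (Complex.I * x * c s))
      ((Complex.I * c s) ^ (n + 1) * Complex.exp (Complex.I * x * c s)) x := by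
  have h1 : HasDerivAt (fun z : ℂ => Complex.I * z * c s) (Complex.I * c s) (x : ℂ) := by
    simpa using ((hasDerivAt_id (x : ℂ)).const_mul Complex.I).mul_const (c s : ℂ)
  have h2 : HasDerivAt (fun z : ℂ => Complex.exp (Complex.I * z * c s))
      (Complex.exp (Complex.I * x * c s) * (Complex.I * c s)) (x : ℂ) :=
    (Complex.hasDerivAt_exp _).comp _ h1
  have h3 := (h2.comp_ofReal).const_mul ((Complex.I * c s) ^ n)
  convert h3 using 1
  · rfl
  ring

variable {c : ℝ → ℝ} {a b : ℝ}

variable {c : ℝ → ℝ} {a b : ℝ}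

lemma intF (hc : Continuous c) (n : ℕ) (x : ℝ) :
    Integrable (fun s => (Complex.I * c s) ^ n * Complex.exp (Complex.I * x * c s))
      (volume.restrict (Set.Ioc a b)) :=
  (contF hc n x).integrableOn_Ioc

lemma Fderiv (hc : Continuous c) (hc1 : ∀ s ∈ Set.Ioc a b, |c s| ≤ 1) (n : ℕ) (x : ℝ) :
    HasDerivAt (F c a b n) (F c a b (n + 1) x) x := by
  haveI := finMeas a b
  have key := hasDerivAt_integral_of_dominated_loc_of_deriv_le (μ := volume.restrict (Set.Ioc a b))
    (F := fun (y : ℝ) s => (Complex.I * c s) ^ n * Complex.exp (Complex.I * (y : ℂ) * c s))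
    (F' := fun (y : ℝ) s => (Complex.I * c s) ^ (n + 1) * Complex.exp (Complex.I * (y : ℂ) * c s))
    (x₀ := x) (bound := fun _ => 1) (Metric.ball_mem_nhds x one_pos)
    (Filter.Eventually.of_forall fun y => (contF hc n y).aestronglyMeasurable)
    (intF hc n x) ((contF hc (n + 1) x).aestronglyMeasurable)
    ?_ (integrable_const 1) ?_
  · exact key.2
  · refine (ae_restrict_iff' measurableSet_Ioc).2 (Filter.Eventually.of_forall fun s hs => ?_)
    intro y _
    rw [norm_integrand]
    exact pow_le_one₀ (abs_nonneg _) (hc1 s hs)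
  · exact Filter.Eventually.of_forall fun s => fun y _ => ptDeriv c s n y

lemma Fnorm (hc : Continuous c) (hab : a ≤ b) (hc1 : ∀ s ∈ Set.Ioc a b, |c s| ≤ 1) (n : ℕ) (x : ℝ) :
    ‖F c a b n x‖ ≤ b - a := by
  have h := norm_setIntegral_le_of_norm_le_const_ae' (C := 1)
    (f := fun s => (Complex.I * (c s : ℂ)) ^ n * Complex.exp (Complex.I * (x : ℂ) * c s))
    (by simp [Real.volume_Ioc] : volume (Set.Ioc a b) < ⊤)
    (Filter.Eventually.of_forall fun s (hs : s ∈ Set.Ioc a b) => by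
      rw [norm_integrand]
      exact pow_le_one₀ (abs_nonneg _) (hc1 s hs))
  calc ‖F c a b n x‖ ≤ 1 * (volume (Set.Ioc a b)).toReal := h
  _ = b - a := by rw [one_mul, Real.volume_Ioc, ENNReal.toReal_ofReal (by linarith)]

lemma Fcont (hc : Continuous c) (hc1 : ∀ s ∈ Set.Ioc a b, |c s| ≤ 1) (n : ℕ) :
    Continuous (F c a b n) :=
  continuous_iff_continuousAt.2 fun x => (Fderiv hc hc1 n x).continuousAt

lemma mom_le {x : ℝ} {n k : ℕ} (hn : n ≤ k) : |x| ^ n ≤ 1 + |x| ^ k := by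
  rcases le_total |x| 1 with h | h
  · exact le_add_of_le_of_nonneg (pow_le_one₀ (abs_nonneg x) h) (by positivity)
  · calc |x| ^ n ≤ |x| ^ k := pow_le_pow_right₀ h hn
    _ ≤ 1 + |x| ^ k := by linarith

section G

variable {Ω : Type*} [MeasurableSpace Ω] (P : Measure Ω) [IsProbabilityMeasure P]
  (ξ : Ω → ℝ) (c : ℝ → ℝ) (a b : ℝ)

noncomputable def G (n : ℕ) (u : ℝ) : ℂ := ∫ ω, (ξ ω : ℂ) ^ n * F c a b n (u * ξ ω) ∂P

variable {P ξ c a b}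
variable (hξ : Measurable ξ) (hc : Continuous c) (hc1 : ∀ s ∈ Set.Ioc a b, |c s| ≤ 1)
  (hab : a ≤ b) {k : ℕ} (hmom : Integrable (fun ω => |ξ ω| ^ k) P)

include hξ hc hc1 in
lemma Gmeas (n : ℕ) (u : ℝ) :
    AEStronglyMeasurable (fun ω => (ξ ω : ℂ) ^ n * F c a b n (u * ξ ω)) P := by
  exact (((Complex.measurable_ofReal.comp hξ).pow_const n).mul
    ((Fcont hc hc1 n).measurable.comp (hξ.const_mul u))).aestronglyMeasurable

include hc hab hc1 in
lemma Gbound {n : ℕ} (hn : n ≤ k) (u : ℝ) (ω : Ω) :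
    ‖(ξ ω : ℂ) ^ n * F c a b n (u * ξ ω)‖ ≤ (1 + |ξ ω| ^ k) * (b - a) := by
  rw [norm_mul, norm_pow, Complex.norm_real, Real.norm_eq_abs]
  exact mul_le_mul (mom_le hn) (Fnorm hc hab hc1 n _) (norm_nonneg _) (by positivity)

include hξ hmom in
lemma boundInt : Integrable (fun ω => (1 + |ξ ω| ^ k) * (b - a)) P :=
  ((integrable_const 1).add hmom).mul_const _

include hξ hc hc1 hab hmom in
lemma Gint {n : ℕ} (hn : n ≤ k) (u : ℝ) :
    Integrable (fun ω => (ξ ω : ℂ) ^ n * F c a b n (u * ξ ω)) P := by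
  refine (boundInt (a := a) (b := b) hξ hmom).mono' (Gmeas hξ hc hc1 n u) ?_
  exact Filter.Eventually.of_forall fun ω => Gbound hc hc1 hab hn u ω

include hξ hc hc1 hab hmom in
lemma Gderiv {n : ℕ} (hn : n + 1 ≤ k) (u : ℝ) :
    HasDerivAt (G P ξ c a b n) (G P ξ c a b (n + 1) u) u := by
  have key := hasDerivAt_integral_of_dominated_loc_of_deriv_le (μ := P)
    (F := fun (v : ℝ) ω => (ξ ω : ℂ) ^ n * F c a b n (v * ξ ω))
    (F' := fun (v : ℝ) ω => (ξ ω : ℂ) ^ (n + 1) * F c a b (n + 1) (v * ξ ω))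
    (x₀ := u) (bound := fun ω => (1 + |ξ ω| ^ k) * (b - a)) (Metric.ball_mem_nhds u one_pos)
    (Filter.Eventually.of_forall fun v => Gmeas hξ hc hc1 n v)
    (Gint hξ hc hc1 hab hmom (le_trans (Nat.le_succ n) hn) u)
    (Gmeas hξ hc hc1 (n + 1) u)
    (Filter.Eventually.of_forall fun ω v _ => Gbound hc hc1 hab hn v ω)
    (boundInt hξ hmom)
    (Filter.Eventually.of_forall fun ω v _ => ?_)
  · exact key.2
  · have h0 : HasDerivAt (fun v : ℝ => v * ξ ω) (ξ ω) v := hasDerivAt_mul_const _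
    have h1 := ((Fderiv hc hc1 n (v * ξ ω)).scomp v h0).const_mul ((ξ ω : ℂ) ^ n)
    convert h1 using 1
    show (ξ ω : ℂ) ^ (n + 1) * F c a b (n + 1) (v * ξ ω) = _
    rw [Complex.real_smul, pow_succ]
    ring
    rfl
    rfl

include hξ hc hc1 hab hmom in
lemma Gcont {n : ℕ} (hn : n ≤ k) : Continuous (G P ξ c a b n) := by
  refine continuous_of_dominated (fun v => Gmeas hξ hc hc1 n v)
    (fun v => Filter.Eventually.of_forall fun ω => Gbound hc hc1 hab hn v ω)
    (boundInt hξ hmom) (Filter.Eventually.of_forall fun ω => ?_)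
  exact continuous_const.mul ((Fcont hc hc1 n).comp (continuous_id.mul continuous_const))

include hξ hc hc1 hab hmom in
lemma GcontDiff : ∀ (n m : ℕ), m + n ≤ k → ContDiff ℝ n (G P ξ c a b m) := by
  intro n
  induction n with
  | zero => exact fun m h => contDiff_zero.2 (Gcont hξ hc hc1 hab hmom (by omega))
  | succ n ih =>
    intro m h
    rw [show ((n + 1 : ℕ) : WithTop ℕ∞) = (n : WithTop ℕ∞) + 1 from by push_cast; rfl,
      contDiff_succ_iff_deriv]
    refine ⟨fun u => (Gderiv hξ hc hc1 hab hmom (by omega) u).differentiableAt,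
      fun hω => by simp at hω, ?_⟩
    have hd : deriv (G P ξ c a b m) = G P ξ c a b (m + 1) :=
      funext fun u => (Gderiv hξ hc hc1 hab hmom (by omega) u).deriv
    rw [hd]
    exact ih (m + 1) (by omega)

include hξ hc hc1 hab hmom in
lemma GiterDeriv : ∀ n, n ≤ k → iteratedDeriv n (G P ξ c a b 0) = G P ξ c a b n := by
  intro n
  induction n with
  | zero => exact fun _ => iteratedDeriv_zero
  | succ n ih =>
    intro h
    rw [iteratedDeriv_succ, ih (by omega)]
    exact funext fun u => (Gderiv hξ hc hc1 hab hmom (by omega) u).deriv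

end G

lemma norm_exp_I_mul (x y z : ℝ) : ‖Complex.exp (Complex.I * x * y * z)‖ = 1 := by
  simp [Complex.norm_exp]

lemma norm_exp_I_mul2 (x y : ℝ) : ‖Complex.exp (Complex.I * x * y)‖ = 1 := by
  simp [Complex.norm_exp]

end K1Aux

open MeasureTheory

/-- The `k`-th derivative at `0` of
`K₁(u) = ∫_{jΔ}^{(j+1)Δ} φ(u e^{−α((j+1)Δ−s)}) ds` is
`i^k E[ξ^k] (1 − e^{−kαΔ})/(kα)`. -/
theorem K1_iteratedDeriv_at_zero {Ω : Type*} [MeasurableSpace Ω] (P : Measure Ω)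
    [IsProbabilityMeasure P] (ξ : Ω → ℝ) (hξmeas : Measurable ξ) (k : ℕ) (hk : 1 ≤ k)
    (hmom : Integrable (fun ω => |ξ ω| ^ k) P)
    (φ : ℝ → ℂ) (hφ : ∀ u : ℝ, φ u = ∫ ω, Complex.exp (Complex.I * (u : ℂ) * (ξ ω : ℂ)) ∂P)
    (α Δ : ℝ) (hα : 0 < α) (hΔ : 0 < Δ) (j : ℕ)
    (K₁ : ℝ → ℂ)
    (hK₁ : ∀ u : ℝ, K₁ u =
      ∫ s in ((j : ℝ) * Δ)..(((j : ℝ) + 1) * Δ), φ (u * Real.exp (-α * (((j : ℝ) + 1) * Δ - s)))) :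
    ContDiffAt ℝ k K₁ 0 ∧
    iteratedDeriv k K₁ 0
      = Complex.I ^ k * ((∫ ω, ξ ω ^ k ∂P : ℝ) : ℂ)
          * (((1 - Real.exp (-(k : ℝ) * α * Δ)) / ((k : ℝ) * α) : ℝ) : ℂ) := by
  set a : ℝ := (j : ℝ) * Δ with ha
  set b : ℝ := ((j : ℝ) + 1) * Δ with hb
  set c : ℝ → ℝ := fun s => Real.exp (-α * (b - s)) with hcdef
  have hab : a ≤ b := by rw [ha, hb]; nlinarith
  have hc : Continuous c :=
    Real.continuous_exp.comp (continuous_const.mul (continuous_const.sub continuous_id))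
  have hc1 : ∀ s ∈ Set.Ioc a b, |c s| ≤ 1 := by
    intro s hs
    rw [abs_of_pos (Real.exp_pos _)]
    have : -α * (b - s) ≤ 0 := by nlinarith [hs.2]
    calc Real.exp (-α * (b - s)) ≤ Real.exp 0 := Real.exp_le_exp.2 this
    _ = 1 := Real.exp_zero
  haveI := K1Aux.finMeas a b
  -- K₁ equals G 0
  have hK : K₁ = K1Aux.G P ξ c a b 0 := by
    funext u
    have hmeas : AEStronglyMeasurable
        (Function.uncurry fun s ω => Complex.exp (Complex.I * ((u * c s : ℝ) : ℂ) * ξ ω))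
        ((volume.restrict (Set.Ioc a b)).prod P) := by
      apply Measurable.aestronglyMeasurable
      apply Measurable.cexp
      exact ((Complex.measurable_ofReal.comp
          ((hc.measurable.comp measurable_fst).const_mul u)).const_mul Complex.I).mul
        (Complex.measurable_ofReal.comp (hξmeas.comp measurable_snd))
    have hint : Integrable
        (Function.uncurry fun s ω => Complex.exp (Complex.I * ((u * c s : ℝ) : ℂ) * ξ ω))
        ((volume.restrict (Set.Ioc a b)).prod P) := by
      refine (integrable_const 1).mono' hmeas (Filter.Eventually.of_forall fun p => ?_)
      rw [Function.uncurry]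
      rw [K1Aux.norm_exp_I_mul2]
    have h2 : ∀ ω, (ξ ω : ℂ) ^ 0 * K1Aux.F c a b 0 (u * ξ ω)
        = ∫ s in Set.Ioc a b, Complex.exp (Complex.I * ((u * c s : ℝ) : ℂ) * ξ ω) := by
      intro ω
      rw [pow_zero, one_mul, K1Aux.F]
      refine integral_congr_ae (Filter.Eventually.of_forall fun s => ?_)
      show (Complex.I * (c s : ℂ)) ^ 0 * Complex.exp (Complex.I * ((u * ξ ω : ℝ) : ℂ) * c s)
        = Complex.exp (Complex.I * ((u * c s : ℝ) : ℂ) * ξ ω)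
      rw [pow_zero, one_mul]
      refine congrArg Complex.exp ?_
      push_cast
      ring
    calc K₁ u = ∫ s in Set.Ioc a b, φ (u * c s) := by
          rw [hK₁ u, intervalIntegral.integral_of_le hab]
    _ = ∫ s in Set.Ioc a b, (∫ ω, Complex.exp (Complex.I * ((u * c s : ℝ) : ℂ) * ξ ω) ∂P) :=
          integral_congr_ae (Filter.Eventually.of_forall fun s => hφ (u * c s))
    _ = ∫ ω, (∫ s in Set.Ioc a b, Complex.exp (Complex.I * ((u * c s : ℝ) : ℂ) * ξ ω)) ∂P :=
          integral_integral_swap hint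
    _ = K1Aux.G P ξ c a b 0 u :=
          (integral_congr_ae (Filter.Eventually.of_forall fun ω => h2 ω)).symm
  -- value of the real integral
  have hkα : (0 : ℝ) < (k : ℝ) * α := by
    have : (1 : ℝ) ≤ (k : ℝ) := by exact_mod_cast hk
    nlinarith
  have hant : ∀ s : ℝ, HasDerivAt (fun s => Real.exp (-((k : ℝ) * α) * (b - s)) / ((k : ℝ) * α))
      (Real.exp (-((k : ℝ) * α) * (b - s))) s := by
    intro s
    have h1 : HasDerivAt (fun s : ℝ => -((k : ℝ) * α) * (b - s)) ((k : ℝ) * α) s := by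
      simpa using ((hasDerivAt_const s b).sub (hasDerivAt_id s)).const_mul (-((k : ℝ) * α))
    have h2 := (Real.hasDerivAt_exp _).comp s h1
    have h3 := h2.div_const ((k : ℝ) * α)
    convert h3 using 1
    · rfl
    · rfl
    · rfl
    field_simp
  have hRint : (∫ s in a..b, Real.exp (-((k : ℝ) * α) * (b - s)))
      = (1 - Real.exp (-(k : ℝ) * α * Δ)) / ((k : ℝ) * α) := by
    rw [intervalIntegral.integral_eq_sub_of_hasDerivAt (fun s _ => hant s)
      ((Real.continuous_exp.comp
        (continuous_const.mul (continuous_const.sub continuous_id))).intervalIntegrable a b)]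
    have hba : b - a = Δ := by rw [ha, hb]; ring
    rw [sub_self, mul_zero, Real.exp_zero, hba]
    rw [show -((k : ℝ) * α) * Δ = -(k : ℝ) * α * Δ by ring]
    ring
  -- value of F k at 0
  have hFk0 : K1Aux.F c a b k 0
      = Complex.I ^ k * (((1 - Real.exp (-(k : ℝ) * α * Δ)) / ((k : ℝ) * α) : ℝ) : ℂ) := by
    rw [K1Aux.F]
    simp only [Complex.ofReal_zero, mul_zero, zero_mul, Complex.exp_zero, mul_one]
    rw [← intervalIntegral.integral_of_le hab]
    simp_rw [mul_pow, ← Complex.ofReal_pow]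
    rw [intervalIntegral.integral_const_mul, intervalIntegral.integral_ofReal]
    congr 1
    rw [← hRint]
    refine congrArg _ (intervalIntegral.integral_congr fun s _ => ?_)
    show Real.exp (-α * (b - s)) ^ k = _
    rw [← Real.exp_nat_mul]
    exact congrArg Real.exp (by ring)
  -- value of G k at 0
  have hGk : K1Aux.G P ξ c a b k 0
      = ((∫ ω, ξ ω ^ k ∂P : ℝ) : ℂ) * K1Aux.F c a b k 0 := by
    rw [K1Aux.G]
    simp_rw [zero_mul]
    rw [integral_mul_const]
    congr 1
    simp_rw [← Complex.ofReal_pow]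
    exact integral_ofReal
  constructor
  · rw [hK]
    exact (K1Aux.GcontDiff hξmeas hc hc1 hab hmom k 0 (by omega)).contDiffAt
  · rw [hK, K1Aux.GiterDeriv hξmeas hc hc1 hab hmom k le_rfl, hGk, hFk0]
    ring
end

section
/- Let ξ be a real random variable with E[|ξ|^k] < ∞ for a fixed integer k ≥ 1, and let φ(u) = E[e^{iuξ}] be its characteristic function. Let α > 0, Δ > 0 and j ∈ ℕ, and define K₂(u) = ∫_0^{jΔ} φ( u (e^{−αΔ} − 1) e^{−α(jΔ − s)} ) ds for u ∈ ℝ. Then K₂ is k times differentiable at 0 and its k-th derivative at 0 is K₂^{(k)}(0) = (−1)^k i^k E[ξ^k] (1 − e^{−αΔ})^k (1 − e^{−kαjΔ})/(kα). -/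
open MeasureTheory

lemma integrable_abs_pow_le {Ω : Type*} [MeasurableSpace Ω] (P : Measure Ω)
    [IsProbabilityMeasure P] (ξ : Ω → ℝ) (hξ : Measurable ξ) {k n : ℕ}
    (hmom : Integrable (fun ω => |ξ ω| ^ k) P) (hn : n ≤ k) :
    Integrable (fun ω => |ξ ω| ^ n) P := by
  apply ((integrable_const (1:ℝ)).add hmom).mono'
    ((hξ.abs.pow_const n).aestronglyMeasurable)
  filter_upwards with ω
  have h0 : (0:ℝ) ≤ |ξ ω| ^ n := pow_nonneg (abs_nonneg _) n
  rw [Real.norm_eq_abs, abs_of_nonneg h0]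
  rcases le_total (|ξ ω|) 1 with h | h
  · have : |ξ ω| ^ n ≤ 1 := pow_le_one₀ (abs_nonneg _) h
    have hk0 : (0:ℝ) ≤ |ξ ω| ^ k := pow_nonneg (abs_nonneg _) k
    simp only [Pi.add_apply]; linarith
  · have : |ξ ω| ^ n ≤ |ξ ω| ^ k := pow_le_pow_right₀ h hn
    simp only [Pi.add_apply]; linarith

lemma integral_Ioc_exp_mul {c T : ℝ} (hc : c ≠ 0) (hT : 0 ≤ T) :
    ∫ s in Set.Ioc 0 T, Real.exp (c * s) = (Real.exp (c * T) - 1) / c := by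
  rw [← intervalIntegral.integral_of_le hT]
  have hd : ∀ x ∈ Set.uIcc (0:ℝ) T,
      HasDerivAt (fun y => Real.exp (c * y) / c) (Real.exp (c * x)) x := by
    intro x _
    have h1 : HasDerivAt (fun y : ℝ => c * y) c x := by simpa using (hasDerivAt_id x).const_mul c
    have h2 := (Real.hasDerivAt_exp (c * x)).comp x h1
    have h3 := h2.div_const c
    simpa [mul_div_assoc, mul_div_cancel_right₀ _ hc] using h3
  rw [intervalIntegral.integral_eq_sub_of_hasDerivAt hd
    ((Real.continuous_exp.comp (continuous_const.mul continuous_id)).intervalIntegrable 0 T)]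
  rw [mul_zero, Real.exp_zero]
  ring

open Real Complex

/-- The `k`-th derivative at `0` of
`K₂(u) = ∫_0^{jΔ} φ(u (e^{−αΔ}−1) e^{−α(jΔ−s)}) ds` is
`(−1)^k i^k E[ξ^k] (1 − e^{−αΔ})^k (1 − e^{−kαjΔ})/(kα)`. -/
theorem K2_iteratedDeriv_at_zero {Ω : Type*} [MeasurableSpace Ω] (P : Measure Ω)
    [IsProbabilityMeasure P] (ξ : Ω → ℝ) (hξmeas : Measurable ξ) (k : ℕ) (hk : 1 ≤ k)
    (hmom : Integrable (fun ω => |ξ ω| ^ k) P)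
    (φ : ℝ → ℂ) (hφ : ∀ u : ℝ, φ u = ∫ ω, Complex.exp (Complex.I * (u : ℂ) * (ξ ω : ℂ)) ∂P)
    (α Δ : ℝ) (hα : 0 < α) (hΔ : 0 < Δ) (j : ℕ)
    (K₂ : ℝ → ℂ)
    (hK₂ : ∀ u : ℝ, K₂ u =
      ∫ s in (0:ℝ)..((j : ℝ) * Δ),
        φ (u * (Real.exp (-α * Δ) - 1) * Real.exp (-α * ((j : ℝ) * Δ - s)))) :
    ContDiffAt ℝ k K₂ 0 ∧
    iteratedDeriv k K₂ 0
      = (-1 : ℂ) ^ k * Complex.I ^ k * ((∫ ω, ξ ω ^ k ∂P : ℝ) : ℂ)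
          * (((1 - Real.exp (-α * Δ)) ^ k * (1 - Real.exp (-(k : ℝ) * α * (j : ℝ) * Δ))
              / ((k : ℝ) * α) : ℝ) : ℂ) := by
  set T : ℝ := (j : ℝ) * Δ with hTdef
  have hT : 0 ≤ T := mul_nonneg (Nat.cast_nonneg j) hΔ.le
  set b : ℝ := Real.exp (-α * Δ) - 1 with hbdef
  set f₁ : ℝ → ℝ := fun s => -(2 * π)⁻¹ * (b * Real.exp (-α * (T - s))) with hf₁def
  have hf₁cont : Continuous f₁ := by fun_prop
  set g : ℝ × Ω → ℝ := fun p => f₁ p.1 * ξ p.2 with hgdef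
  have hg : Measurable g := (hf₁cont.measurable.comp measurable_fst).mul
    (hξmeas.comp measurable_snd)
  set μ₀ : Measure (ℝ × Ω) := (volume.restrict (Set.Ioc 0 T)).prod P with hμ₀def
  set ν : Measure ℝ := μ₀.map g with hνdef
  set L : ℝ →L[ℝ] ℝ →L[ℝ] ℝ := ContinuousLinearMap.mul ℝ ℝ with hLdef
  set F : ℝ → ℂ := VectorFourier.fourierIntegral Real.fourierChar ν L.toLinearMap₁₂
    (fun _ => (1 : ℂ)) with hFdef
  have hπ : (2 * π : ℝ) ≠ 0 := by positivity
  -- moment integrability for ν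
  have hint : ∀ n : ℕ, n ≤ k → Integrable (fun v : ℝ => ‖v‖ ^ n * ‖(1 : ℂ)‖) ν := by
    intro n hn
    simp only [norm_one, mul_one, Real.norm_eq_abs]
    rw [hνdef, integrable_map_measure ((by fun_prop : Measurable fun v : ℝ => |v| ^ n)).aestronglyMeasurable
      hg.aemeasurable]
    have : ((fun v : ℝ => |v| ^ n) ∘ g) = fun p : ℝ × Ω => |f₁ p.1| ^ n * |ξ p.2| ^ n := by
      funext p; simp [hgdef, abs_mul, mul_pow]
    rw [this]
    exact Integrable.mul_prod ((hf₁cont.abs.pow n).integrableOn_Ioc)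
      (integrable_abs_pow_le P ξ hξmeas hmom hn)
  have hint' : ∀ n : ℕ, (n : ℕ∞) ≤ (k : ℕ∞) → Integrable (fun v : ℝ => ‖v‖ ^ n * ‖(1 : ℂ)‖) ν :=
    fun n hn => hint n (by exact_mod_cast hn)
  -- K₂ equals the Fourier integral F
  have hπC : ((2 * π : ℝ) : ℂ) ≠ 0 := by exact_mod_cast hπ
  haveI : IsFiniteMeasure (volume.restrict (Set.Ioc (0:ℝ) T)) := by
    constructor
    rw [Measure.restrict_apply_univ, Real.volume_Ioc]
    exact ENNReal.ofReal_lt_top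
  have hK : K₂ = F := by
    funext u
    rw [hK₂ u, intervalIntegral.integral_of_le hT, hFdef]
    rw [VectorFourier.fourierIntegral]
    have he : ∀ v : ℝ, ((Real.fourierChar (-(L.toLinearMap₁₂ v u)) : ℂ) • (1 : ℂ))
        = Complex.exp (Complex.I * ((-(2 * π * u) : ℝ) : ℂ) * (v : ℂ)) := by
      intro v
      have hL : L.toLinearMap₁₂ v u = v * u := rfl
      rw [hL, smul_eq_mul, mul_one, Real.fourierChar_apply]
      congr 1
      push_cast
      ring
    simp only [Circle.smul_def, he]
    have meas₁ : AEStronglyMeasurable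
        (fun v : ℝ => Complex.exp (Complex.I * ((-(2 * π * u) : ℝ) : ℂ) * (v : ℂ))) ν :=
      (Complex.continuous_exp.comp (by fun_prop)).aestronglyMeasurable
    rw [hνdef, integral_map hg.aemeasurable meas₁]
    have habs : ∀ (c x : ℝ), ‖Complex.exp (Complex.I * (c : ℂ) * (x : ℂ))‖ = 1 := by
      intro c x
      rw [show (Complex.I * (c : ℂ) * (x : ℂ)) = ((c * x : ℝ) : ℂ) * Complex.I by
        push_cast; ring, Complex.norm_exp_ofReal_mul_I]
    have hInt : Integrable
        (fun p : ℝ × Ω => Complex.exp (Complex.I * ((-(2 * π * u) : ℝ) : ℂ) * ((g p : ℝ) : ℂ)))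
        μ₀ := by
      apply (integrable_const (1 : ℝ)).mono'
      · exact (Complex.measurable_exp.comp
          (((Complex.measurable_ofReal.comp hg).const_mul _))).aestronglyMeasurable
      · filter_upwards with p
        rw [habs]
    rw [hμ₀def, MeasureTheory.integral_prod _ hInt]
    apply integral_congr_ae (ae_of_all _ fun s => ?_)
    rw [hφ]
    apply integral_congr_ae (ae_of_all _ fun ω => ?_)
    congr 1
    show Complex.I * ((u * b * Real.exp (-α * (T - s)) : ℝ) : ℂ) * ((ξ ω : ℝ) : ℂ)
      = Complex.I * ((-(2 * π * u) : ℝ) : ℂ) * ((f₁ s * ξ ω : ℝ) : ℂ)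
    rw [hf₁def]
    push_cast
    field_simp [Complex.ofReal_ne_zero.mpr Real.pi_ne_zero]
    try ring
  have hCD : ContDiff ℝ (k : ℕ∞) F :=
    VectorFourier.contDiff_fourierIntegral L hint'
  refine ⟨by rw [hK]; exact hCD.contDiffAt, ?_⟩
  have hkpos : (0:ℝ) < (k:ℝ) := by exact_mod_cast hk
  have hkα : (k:ℝ) * α ≠ 0 := ne_of_gt (mul_pos hkpos hα)
  -- value of the k-th derivative of F at 0
  rw [hK, iteratedDeriv_eq_iteratedFDeriv, hFdef,
    VectorFourier.iteratedFDeriv_fourierIntegral L hint' aestronglyMeasurable_const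
      (le_refl (k:ℕ∞)),
    VectorFourier.fourierIntegral_continuousMultilinearMap_apply Real.continuous_fourierChar
      (VectorFourier.integrable_fourierPowSMulRight L (hint k le_rfl)
        aestronglyMeasurable_const),
    VectorFourier.fourierIntegral]
  have hiv : ∀ v : ℝ,
      (Real.fourierChar (-(L.toLinearMap₁₂ v (0:ℝ))) : ℂ) •
        ((VectorFourier.fourierPowSMulRight L (fun _ => (1:ℂ)) v k) (fun _ => (1:ℝ)))
      = (-(2 * (π:ℂ) * Complex.I))^k * ((v ^ k : ℝ) : ℂ) := by
    intro v
    rw [show L.toLinearMap₁₂ v (0:ℝ) = 0 from mul_zero v, neg_zero]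
    rw [VectorFourier.fourierPowSMulRight_apply]
    simp only [AddChar.map_zero_eq_one, OneMemClass.coe_one, one_smul]
    rw [show (∏ i : Fin k, L v ((fun _ => (1:ℝ)) i)) = v ^ k by
      simp [hLdef]]
    rw [smul_eq_mul, Complex.real_smul, mul_one]
    simp
  simp only [Circle.smul_def, hiv]
  have hIntk : Integrable (fun v : ℝ => v ^ k) ν := by
    have h := hint k le_rfl
    simp only [norm_one, mul_one, Real.norm_eq_abs] at h
    apply h.mono' ((by fun_prop : Measurable fun v : ℝ => v ^ k)).aestronglyMeasurable
    filter_upwards with v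
    exact le_of_eq (_root_.abs_pow v k)
  rw [integral_const_mul,
    show (∫ a : ℝ, ((a ^ k : ℝ) : ℂ) ∂ν) = ((∫ a : ℝ, a ^ k ∂ν : ℝ) : ℂ) from
      Complex.ofRealCLM.integral_comp_comm hIntk]
  have hM : (∫ v, v ^ k ∂ν) = (∫ s in Set.Ioc (0:ℝ) T, f₁ s ^ k) * ∫ ω, ξ ω ^ k ∂P := by
    rw [hνdef, integral_map hg.aemeasurable
      ((by fun_prop : Measurable fun v : ℝ => v ^ k)).aestronglyMeasurable, hμ₀def]
    rw [show (fun p : ℝ × Ω => g p ^ k) = fun p => (f₁ p.1) ^ k * (ξ p.2) ^ k by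
      funext p; simp [hgdef, mul_pow]]
    exact integral_prod_mul (μ := volume.restrict (Set.Ioc 0 T)) (ν := P) (fun s => f₁ s ^ k) (fun ω => ξ ω ^ k)
  have hA : (∫ s in Set.Ioc (0:ℝ) T, f₁ s ^ k)
      = (-(2*π)⁻¹)^k * b^k * ((1 - Real.exp (-((k:ℝ)*α*T)))/((k:ℝ)*α)) := by
    have hpt : ∀ s : ℝ, f₁ s ^ k
        = ((-(2*π)⁻¹)^k * b^k * Real.exp (-((k:ℝ)*α*T))) * Real.exp (((k:ℝ)*α) * s) := by
      intro s
      rw [hf₁def]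
      simp only [mul_pow]
      rw [← Real.exp_nat_mul, show (k:ℝ) * (-α*(T-s)) = (-((k:ℝ)*α*T)) + ((k:ℝ)*α)*s by ring,
        Real.exp_add]
      ring
    simp only [hpt]
    rw [integral_const_mul, integral_Ioc_exp_mul hkα hT]
    have h1 : Real.exp (-((k:ℝ)*α*T)) * (Real.exp (((k:ℝ)*α)*T) - 1)
        = 1 - Real.exp (-((k:ℝ)*α*T)) := by
      rw [mul_sub, ← Real.exp_add, mul_one,
        show (-((k:ℝ)*α*T) + ((k:ℝ)*α)*T) = 0 by ring, Real.exp_zero]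
    rw [show (-(2*π)⁻¹)^k * b^k * Real.exp (-((k:ℝ)*α*T))
          * ((Real.exp (((k:ℝ)*α)*T) - 1)/((k:ℝ)*α))
        = (-(2*π)⁻¹)^k * b^k
          * ((Real.exp (-((k:ℝ)*α*T)) * (Real.exp (((k:ℝ)*α)*T) - 1))/((k:ℝ)*α)) by ring, h1]
  rw [hM, hA, hTdef]
  rw [show (-((k:ℝ)*α*((j:ℝ)*Δ)) : ℝ) = -(k:ℝ)*α*(j:ℝ)*Δ by ring]
  have c1 : ((2*π)^k : ℝ) * (-(2*π)⁻¹)^k = (-1)^k := by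
    rw [← mul_pow, mul_neg, mul_inv_cancel₀ hπ]
  have c2 : ((-1:ℝ))^k * b^k = (1 - Real.exp (-α*Δ))^k := by
    rw [← neg_pow]
    congr 1
    rw [hbdef]
    ring
  have hreal : (2*π)^k * ((-(2*π)⁻¹)^k * b^k * ((1 - Real.exp (-(k:ℝ)*α*(j:ℝ)*Δ))/((k:ℝ)*α)) * (∫ ω, ξ ω ^ k ∂P))
      = (∫ ω, ξ ω ^ k ∂P) * ((1 - Real.exp (-α*Δ))^k * (1 - Real.exp (-(k:ℝ)*α*(j:ℝ)*Δ))/((k:ℝ)*α)) := by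
    calc (2*π)^k * ((-(2*π)⁻¹)^k * b^k * ((1 - Real.exp (-(k:ℝ)*α*(j:ℝ)*Δ))/((k:ℝ)*α)) * (∫ ω, ξ ω ^ k ∂P))
        = (((2*π)^k * (-(2*π)⁻¹)^k) * b^k) * ((1 - Real.exp (-(k:ℝ)*α*(j:ℝ)*Δ))/((k:ℝ)*α)) * (∫ ω, ξ ω ^ k ∂P) := by ring
      _ = (((-1:ℝ)^k) * b^k) * ((1 - Real.exp (-(k:ℝ)*α*(j:ℝ)*Δ))/((k:ℝ)*α)) * (∫ ω, ξ ω ^ k ∂P) := by rw [c1]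
      _ = (1 - Real.exp (-α*Δ))^k * ((1 - Real.exp (-(k:ℝ)*α*(j:ℝ)*Δ))/((k:ℝ)*α)) * (∫ ω, ξ ω ^ k ∂P) := by rw [c2]
      _ = (∫ ω, ξ ω ^ k ∂P) * ((1 - Real.exp (-α*Δ))^k * (1 - Real.exp (-(k:ℝ)*α*(j:ℝ)*Δ))/((k:ℝ)*α)) := by ring
  have key : (-(2*(π:ℂ)*Complex.I))^k = (-1:ℂ)^k * (((2*π : ℝ)):ℂ)^k * Complex.I^k := by
    rw [show (-(2*(π:ℂ)*Complex.I)) = ((-1:ℂ) * ((2*π:ℝ):ℂ)) * Complex.I by push_cast; ring,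
      mul_pow, mul_pow]
  calc (-(2*(π:ℂ)*Complex.I))^k * (((-(2*π)⁻¹)^k * b^k * ((1 - Real.exp (-(k:ℝ)*α*(j:ℝ)*Δ))/((k:ℝ)*α)) * (∫ ω, ξ ω ^ k ∂P) : ℝ) : ℂ)
      = ((-1:ℂ)^k * Complex.I^k) *
          (((2*π)^k * ((-(2*π)⁻¹)^k * b^k * ((1 - Real.exp (-(k:ℝ)*α*(j:ℝ)*Δ))/((k:ℝ)*α)) * (∫ ω, ξ ω ^ k ∂P)) : ℝ) : ℂ) := by rw [key]; push_cast; ring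
    _ = ((-1:ℂ)^k * Complex.I^k) * (((∫ ω, ξ ω ^ k ∂P) * ((1 - Real.exp (-α*Δ))^k * (1 - Real.exp (-(k:ℝ)*α*(j:ℝ)*Δ))/((k:ℝ)*α)) : ℝ) : ℂ) := by rw [hreal]
    _ = (-1 : ℂ) ^ k * Complex.I ^ k * (((∫ ω, ξ ω ^ k ∂P) : ℝ) : ℂ) * ((((1 - Real.exp (-α*Δ))^k * (1 - Real.exp (-(k:ℝ)*α*(j:ℝ)*Δ))/((k:ℝ)*α)) : ℝ) : ℂ) := by
        push_cast; ring
end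

section
/- Let α > 0, Δ > 0, j ∈ ℕ, λ ≥ 0 and μ, σ ∈ ℝ. Let ξ be a real random variable with E[|ξ|] < ∞ and characteristic function φ, and set K₁(u) = ∫_{jΔ}^{(j+1)Δ} φ( u e^{−α((j+1)Δ − s)} ) ds, K₂(u) = ∫_0^{jΔ} φ( u (e^{−αΔ} − 1) e^{−α(jΔ − s)} ) ds, E_{j,k}(α) = (1 − e^{−kαΔ}) + (−1)^k (1 − e^{−αΔ})^k (1 − e^{−kαjΔ}), and T₁(u) = −λ(j+1)Δ + i μ e^{−αjΔ}(1 − e^{−αΔ}) u − (σ²/(4α)) E_{j,2}(α) u² + λ ( K₁(u) + K₂(u) ). If X is a real random variable with E[|X|] < ∞ whose characteristic function is exp(T₁(u)), then E[X] = μ e^{−αjΔ}(1 − e^{−αΔ}) + (λ/α) E[ξ] E_{j,1}(α). -/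
open MeasureTheory

open Complex Filter Metric in
private lemma charDeriv {Ω : Type*} [MeasurableSpace Ω] (P : Measure Ω) [IsProbabilityMeasure P]
    (ξ : Ω → ℝ) (hm : Measurable ξ) (hint : Integrable ξ P) (v : ℝ) :
    HasDerivAt (fun u : ℝ => ∫ ω, Complex.exp (Complex.I * (u : ℂ) * (ξ ω : ℂ)) ∂P)
      (∫ ω, Complex.I * (ξ ω : ℂ) * Complex.exp (Complex.I * (v : ℂ) * (ξ ω : ℂ)) ∂P) v := by
  have hmF : ∀ x : ℝ, Measurable (fun ω => Complex.exp (Complex.I * (x:ℂ) * (ξ ω:ℂ))) :=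
    fun x => Complex.measurable_exp.comp (measurable_const.mul (Complex.measurable_ofReal.comp hm))
  have hnorm1 : ∀ (x : ℝ) (ω : Ω), ‖Complex.exp (Complex.I * (x:ℂ) * (ξ ω:ℂ))‖ = 1 := by
    intro x ω
    rw [Complex.norm_exp]
    simp
  have hFint : ∀ x : ℝ, Integrable (fun ω => Complex.exp (Complex.I * (x:ℂ) * (ξ ω:ℂ))) P :=
    fun x => Integrable.mono' (integrable_const 1) (hmF x).aestronglyMeasurable
      (Eventually.of_forall fun ω => (hnorm1 x ω).le)
  have hnormF' : ∀ (x : ℝ) (ω : Ω),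
      ‖Complex.I * (ξ ω:ℂ) * Complex.exp (Complex.I * (x:ℂ) * (ξ ω:ℂ))‖ = |ξ ω| := by
    intro x ω
    rw [norm_mul, hnorm1 x ω, mul_one, norm_mul, Complex.norm_I, one_mul, Complex.norm_real,
      Real.norm_eq_abs]
  have hdiff : ∀ (ω : Ω) (x : ℝ), HasDerivAt (fun u : ℝ => Complex.exp (Complex.I * (u:ℂ) * (ξ ω:ℂ)))
      (Complex.I * (ξ ω:ℂ) * Complex.exp (Complex.I * (x:ℂ) * (ξ ω:ℂ))) x := by
    intro ω x
    have h1 : HasDerivAt (fun u : ℝ => Complex.I * (u:ℂ) * (ξ ω:ℂ)) (Complex.I * (ξ ω:ℂ)) x := by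
      simpa using ((Complex.ofRealCLM.hasDerivAt (x := x)).const_mul Complex.I).mul_const ((ξ ω : ℂ))
    have := h1.cexp
    convert this using 1
    ring
  have key := hasDerivAt_integral_of_dominated_loc_of_deriv_le (μ := P) (x₀ := v)
      (F := fun (x : ℝ) ω => Complex.exp (Complex.I * (x:ℂ) * (ξ ω:ℂ)))
      (F' := fun (x : ℝ) ω => Complex.I * (ξ ω:ℂ) * Complex.exp (Complex.I * (x:ℂ) * (ξ ω:ℂ)))
      (bound := fun ω => |ξ ω|) (Metric.ball_mem_nhds v one_pos)
      (Eventually.of_forall fun x => (hmF x).aestronglyMeasurable) (hFint v)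
      (((measurable_const.mul (Complex.measurable_ofReal.comp hm)).mul (hmF v)).aestronglyMeasurable)
      (Eventually.of_forall fun ω => fun x _ => (hnormF' x ω).le)
      hint.abs
      (Eventually.of_forall fun ω => fun x _ => hdiff ω x)
  exact key.2

open Complex Filter Metric in
private lemma charDeriv_bound {Ω : Type*} [MeasurableSpace Ω] (P : Measure Ω)
    [IsProbabilityMeasure P] (ξ : Ω → ℝ) (v : ℝ) :
    ‖∫ ω, Complex.I * (ξ ω : ℂ) * Complex.exp (Complex.I * (v : ℂ) * (ξ ω : ℂ)) ∂P‖
      ≤ ∫ ω, |ξ ω| ∂P := by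
  refine (norm_integral_le_integral_norm _).trans (le_of_eq (integral_congr_ae
    (Eventually.of_forall fun ω => ?_)))
  show ‖Complex.I * (ξ ω : ℂ) * Complex.exp (Complex.I * (v : ℂ) * (ξ ω : ℂ))‖ = |ξ ω|
  have h1 : ‖Complex.exp (Complex.I * (v:ℂ) * (ξ ω:ℂ))‖ = 1 := by
    rw [Complex.norm_exp]; simp
  rw [norm_mul, h1, mul_one, norm_mul, Complex.norm_I, one_mul, Complex.norm_real,
    Real.norm_eq_abs]

open Complex Filter Metric in
private lemma charDeriv0 {Ω : Type*} [MeasurableSpace Ω] (P : Measure Ω) [IsProbabilityMeasure P]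
    (ξ : Ω → ℝ) (hm : Measurable ξ) (hint : Integrable ξ P) :
    HasDerivAt (fun u : ℝ => ∫ ω, Complex.exp (Complex.I * (u : ℂ) * (ξ ω : ℂ)) ∂P)
      (Complex.I * ((∫ ω, ξ ω ∂P : ℝ) : ℂ)) 0 := by
  have h := charDeriv P ξ hm hint 0
  have heq : (∫ ω, Complex.I * (ξ ω : ℂ) * Complex.exp (Complex.I * ((0:ℝ) : ℂ) * (ξ ω : ℂ)) ∂P)
      = Complex.I * ((∫ ω, ξ ω ∂P : ℝ) : ℂ) := by
    simp only [Complex.ofReal_zero, mul_zero, zero_mul, Complex.exp_zero, mul_one]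
    rw [integral_const_mul]
    congr 1
    have := integral_ofReal (𝕜 := ℂ) (f := ξ) (μ := P)
    simpa using this
  rwa [heq] at h

open Complex Filter Metric in
private lemma aux_K {Ω : Type*} [MeasurableSpace Ω] (P : Measure Ω) [IsProbabilityMeasure P]
    (ξ : Ω → ℝ) (hm : Measurable ξ) (hint : Integrable ξ P)
    (c : ℝ → ℝ) (hc : Continuous c) (a b : ℝ) :
    HasDerivAt (fun u : ℝ =>
        ∫ s in a..b, (∫ ω, Complex.exp (Complex.I * ((u * c s : ℝ) : ℂ) * (ξ ω : ℂ)) ∂P))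
      ((∫ s in a..b, c s) • (Complex.I * ((∫ ω, ξ ω ∂P : ℝ) : ℂ))) 0 := by
  set φint : ℝ → ℂ := fun v => ∫ ω, Complex.exp (Complex.I * (v : ℂ) * (ξ ω : ℂ)) ∂P with hφint
  set D : ℝ → ℂ :=
    fun v => ∫ ω, Complex.I * (ξ ω : ℂ) * Complex.exp (Complex.I * (v : ℂ) * (ξ ω : ℂ)) ∂P
    with hD
  have hφc : Continuous φint :=
    continuous_iff_continuousAt.2 fun v => (charDeriv P ξ hm hint v).continuousAt
  have hdiff : ∀ (t : ℝ) (x : ℝ),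
      HasDerivAt (fun x : ℝ => φint (x * c t)) (c t • D (x * c t)) x := by
    intro t x
    exact (charDeriv P ξ hm hint (x * c t)).scomp x (hasDerivAt_mul_const (c t))
  have key := intervalIntegral.hasDerivAt_integral_of_dominated_loc_of_deriv_le
      (μ := volume) (a := a) (b := b) (x₀ := (0:ℝ))
      (F := fun (x : ℝ) (s : ℝ) => φint (x * c s))
      (F' := fun (x : ℝ) (s : ℝ) => c s • D (x * c s))
      (bound := fun s => |c s| * (∫ ω, |ξ ω| ∂P)) (Metric.ball_mem_nhds 0 one_pos)
      (Eventually.of_forall fun x =>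
        ((hφc.comp ((continuous_const.mul hc))).aestronglyMeasurable))
      (((hφc.comp ((continuous_const (y := (0:ℝ))).mul hc))).intervalIntegrable a b)
      (by
        have : Continuous fun s => c s • D (0 * c s) := by
          simp only [zero_mul]
          exact hc.smul continuous_const
        exact this.aestronglyMeasurable)
      (Eventually.of_forall fun t _ x _ => by
        rw [norm_smul, Real.norm_eq_abs]
        exact mul_le_mul_of_nonneg_left (charDeriv_bound P ξ (x * c t)) (abs_nonneg _))
      ((hc.abs.mul continuous_const).intervalIntegrable a b)
      (Eventually.of_forall fun t _ x _ => hdiff t x)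
  have h2 := key.2
  have heq : (∫ s in a..b, c s • D (0 * c s)) = (∫ s in a..b, c s) • D 0 := by
    simp only [zero_mul]
    exact intervalIntegral.integral_smul_const _ _
  rw [heq] at h2
  have hD0 : D 0 = Complex.I * ((∫ ω, ξ ω ∂P : ℝ) : ℂ) := by
    have h1 := (charDeriv P ξ hm hint 0).unique (charDeriv0 P ξ hm hint)
    simpa [hD] using h1
  rw [hD0] at h2
  convert h2 using 2

private lemma int_exp_aux (α a b : ℝ) (hα : α ≠ 0) :
    ∫ s in a..b, Real.exp (-α * (b - s)) = (1 - Real.exp (-α * (b - a))) / α := by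
  have hd : ∀ s ∈ Set.uIcc a b,
      HasDerivAt (fun s => Real.exp (-α * (b - s)) / α) (Real.exp (-α * (b - s))) s := by
    intro s _
    have h1 : HasDerivAt (fun s : ℝ => -α * (b - s)) α s := by
      simpa using ((hasDerivAt_id s).const_sub b).const_mul (-α)
    have := (h1.exp).div_const α
    exact this.congr_deriv (mul_div_cancel_right₀ _ hα)
  rw [intervalIntegral.integral_eq_sub_of_hasDerivAt hd
    ((Real.continuous_exp.comp
      (continuous_const.mul (continuous_const.sub continuous_id))).intervalIntegrable a b)]
  simp
  ring

/-- First moment of the log-return of the mean-reverting jump-diffusion model. -/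
theorem logReturn_first_moment {Ω Ωx : Type*} [MeasurableSpace Ω] [MeasurableSpace Ωx]
    (P : Measure Ω) (Px : Measure Ωx)
    [IsProbabilityMeasure P] [IsProbabilityMeasure Px]
    (α Δ lam μ σ : ℝ) (j : ℕ) (hα : 0 < α) (hΔ : 0 < Δ) (hlam : 0 ≤ lam)
    (ξ : Ω → ℝ) (hξmeas : Measurable ξ)
    (φ : ℝ → ℂ)
    (hφ : ∀ u : ℝ, φ u = ∫ ω, Complex.exp (Complex.I * (u : ℂ) * (ξ ω : ℂ)) ∂P)
    (K₁ K₂ : ℝ → ℂ)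
    (hK₁ : ∀ u : ℝ, K₁ u =
      ∫ s in ((j : ℝ) * Δ)..(((j : ℝ) + 1) * Δ), φ (u * Real.exp (-α * (((j : ℝ) + 1) * Δ - s))))
    (hK₂ : ∀ u : ℝ, K₂ u =
      ∫ s in (0:ℝ)..((j : ℝ) * Δ),
        φ (u * (Real.exp (-α * Δ) - 1) * Real.exp (-α * ((j : ℝ) * Δ - s))))
    (E : ℕ → ℝ)
    (hE : ∀ k : ℕ, E k = (1 - Real.exp (-(k : ℝ) * α * Δ))
        + (-1 : ℝ) ^ k * (1 - Real.exp (-α * Δ)) ^ k * (1 - Real.exp (-(k : ℝ) * α * (j : ℝ) * Δ)))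
    (T₁ : ℝ → ℂ)
    (hT₁ : ∀ u : ℝ, T₁ u = -((lam * ((j : ℝ) + 1) * Δ : ℝ) : ℂ)
        + Complex.I * ((μ * Real.exp (-α * (j : ℝ) * Δ) * (1 - Real.exp (-α * Δ)) : ℝ) : ℂ) * (u : ℂ)
        - ((σ ^ 2 / (4 * α) * E 2 : ℝ) : ℂ) * (u : ℂ) ^ 2
        + ((lam : ℝ) : ℂ) * (K₁ u + K₂ u))
    (X : Ωx → ℝ) (hXmeas : Measurable X)
    (hchar : ∀ u : ℝ, ∫ ω, Complex.exp (Complex.I * (u : ℂ) * (X ω : ℂ)) ∂Px = Complex.exp (T₁ u))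
    (hξint : Integrable ξ P) (hXint : Integrable X Px) :
    ∫ ω, X ω ∂Px
      = μ * Real.exp (-α * (j : ℝ) * Δ) * (1 - Real.exp (-α * Δ))
        + lam / α * (∫ ω, ξ ω ∂P) * E 1 := by
  set a₁ : ℝ := (j : ℝ) * Δ with ha₁
  set b₁ : ℝ := ((j : ℝ) + 1) * Δ with hb₁
  set c₁ : ℝ → ℝ := fun s => Real.exp (-α * (((j : ℝ) + 1) * Δ - s)) with hc₁def
  set c₂ : ℝ → ℝ := fun s => (Real.exp (-α * Δ) - 1) * Real.exp (-α * ((j : ℝ) * Δ - s)) with hc₂def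
  have hc₁ : Continuous c₁ :=
    Real.continuous_exp.comp (continuous_const.mul (continuous_const.sub continuous_id))
  have hc₂ : Continuous c₂ :=
    continuous_const.mul
      (Real.continuous_exp.comp (continuous_const.mul (continuous_const.sub continuous_id)))
  set m : ℝ := μ * Real.exp (-α * (j : ℝ) * Δ) * (1 - Real.exp (-α * Δ)) with hm
  set Iξ : ℝ := ∫ ω, ξ ω ∂P with hIξ
  set D0 : ℂ := Complex.I * (Iξ : ℂ) with hD0
  -- rewrite K₁ and K₂
  have hK1fun : K₁ = fun u : ℝ =>
      ∫ s in a₁..b₁, (∫ ω, Complex.exp (Complex.I * ((u * c₁ s : ℝ) : ℂ) * (ξ ω : ℂ)) ∂P) := by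
    funext u
    rw [hK₁ u]
    exact intervalIntegral.integral_congr fun s _ => hφ _
  have hK2fun : K₂ = fun u : ℝ =>
      ∫ s in (0:ℝ)..a₁, (∫ ω, Complex.exp (Complex.I * ((u * c₂ s : ℝ) : ℂ) * (ξ ω : ℂ)) ∂P) := by
    funext u
    rw [hK₂ u]
    refine intervalIntegral.integral_congr fun s _ => ?_
    rw [mul_assoc]
    exact hφ _
  have hK1d : HasDerivAt K₁ ((∫ s in a₁..b₁, c₁ s) • D0) 0 := by
    rw [hK1fun]
    exact aux_K P ξ hξmeas hξint c₁ hc₁ a₁ b₁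
  have hK2d : HasDerivAt K₂ ((∫ s in (0:ℝ)..a₁, c₂ s) • D0) 0 := by
    rw [hK2fun]
    exact aux_K P ξ hξmeas hξint c₂ hc₂ 0 a₁
  -- values of the two c-integrals
  have hC₁ : (∫ s in a₁..b₁, c₁ s) = (1 - Real.exp (-α * Δ)) / α := by
    have h0 : b₁ - a₁ = Δ := by rw [ha₁, hb₁]; ring
    have := int_exp_aux α a₁ b₁ hα.ne'
    rw [h0] at this
    exact this
  have hC₂ : (∫ s in (0:ℝ)..a₁, c₂ s)
      = (Real.exp (-α * Δ) - 1) * ((1 - Real.exp (-α * ((j : ℝ) * Δ))) / α) := by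
    have h1 : (∫ s in (0:ℝ)..a₁, c₂ s)
        = (Real.exp (-α * Δ) - 1) * ∫ s in (0:ℝ)..a₁, Real.exp (-α * ((j:ℝ) * Δ - s)) := by
      rw [hc₂def]
      exact intervalIntegral.integral_const_mul _ _
    have h0 : a₁ - 0 = (j : ℝ) * Δ := by rw [ha₁]; ring
    have h2 := int_exp_aux α 0 a₁ hα.ne'
    rw [h0] at h2
    rw [h1, ha₁, h2]
  -- value of T₁ at 0
  have hφ0 : ∀ v : ℝ, φ (0 * v) = 1 := by
    intro v
    rw [hφ]
    simp
  have hK10 : K₁ 0 = (Δ : ℂ) := by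
    rw [hK₁ 0]
    have : (∫ s in a₁..b₁, φ (0 * Real.exp (-α * (((j : ℝ) + 1) * Δ - s))))
        = ∫ s in a₁..b₁, (1:ℂ) := intervalIntegral.integral_congr fun s _ => hφ0 _
    rw [this, intervalIntegral.integral_const]
    rw [hb₁, ha₁]
    push_cast
    rw [Complex.real_smul]
    push_cast
    ring
  have hK20 : K₂ 0 = (((j : ℝ) * Δ : ℝ) : ℂ) := by
    rw [hK₂ 0]
    have : (∫ s in (0:ℝ)..a₁,
          φ (0 * (Real.exp (-α * Δ) - 1) * Real.exp (-α * ((j : ℝ) * Δ - s))))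
        = ∫ s in (0:ℝ)..a₁, (1:ℂ) := by
      refine intervalIntegral.integral_congr fun s _ => ?_
      rw [mul_assoc]
      exact hφ0 _
    rw [this, intervalIntegral.integral_const]
    rw [ha₁]
    rw [Complex.real_smul]
    push_cast
    ring
  have hT0 : T₁ 0 = 0 := by
    rw [hT₁ 0, hK10, hK20]
    push_cast
    ring
  -- derivative of T₁ at 0
  set d : ℂ := Complex.I * (m : ℂ)
      + ((lam : ℝ) : ℂ) * ((∫ s in a₁..b₁, c₁ s) • D0 + (∫ s in (0:ℝ)..a₁, c₂ s) • D0) with hd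
  have hTd : HasDerivAt T₁ d 0 := by
    have hT₁' : T₁ = fun u : ℝ => -((lam * ((j : ℝ) + 1) * Δ : ℝ) : ℂ)
        + Complex.I * ((m : ℝ) : ℂ) * (u : ℂ)
        - ((σ ^ 2 / (4 * α) * E 2 : ℝ) : ℂ) * (u : ℂ) ^ 2
        + ((lam : ℝ) : ℂ) * (K₁ u + K₂ u) := funext hT₁
    rw [hT₁']
    have hu : HasDerivAt (fun u : ℝ => (u : ℂ)) 1 0 := by
      simpa using (hasDerivAt_id (0:ℝ)).ofReal_comp
    have t2 : HasDerivAt (fun u : ℝ => Complex.I * ((m : ℝ) : ℂ) * (u : ℂ))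
        (Complex.I * ((m : ℝ) : ℂ)) 0 := by
      simpa using hu.const_mul (Complex.I * ((m : ℝ) : ℂ))
    have t3 : HasDerivAt (fun u : ℝ => ((σ ^ 2 / (4 * α) * E 2 : ℝ) : ℂ) * (u : ℂ) ^ 2)
        0 0 := by
      have h2 := (hu.mul hu).const_mul ((σ ^ 2 / (4 * α) * E 2 : ℝ) : ℂ)
      simpa [pow_two] using h2
    have t4 : HasDerivAt (fun u : ℝ => ((lam : ℝ) : ℂ) * (K₁ u + K₂ u))
        (((lam : ℝ) : ℂ) * ((∫ s in a₁..b₁, c₁ s) • D0 + (∫ s in (0:ℝ)..a₁, c₂ s) • D0)) 0 :=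
      (hK1d.add hK2d).const_mul _
    have := (((hasDerivAt_const (0:ℝ) (-((lam * ((j : ℝ) + 1) * Δ : ℝ) : ℂ))).add t2).sub t3).add t4
    exact this.congr_deriv (by simp [hd])
  -- derivative of the characteristic function of X at 0
  have hXd : HasDerivAt (fun u : ℝ => ∫ ω, Complex.exp (Complex.I * (u : ℂ) * (X ω : ℂ)) ∂Px)
      (Complex.I * ((∫ ω, X ω ∂Px : ℝ) : ℂ)) 0 := charDeriv0 Px X hXmeas hXint
  have hcharfun : (fun u : ℝ => ∫ ω, Complex.exp (Complex.I * (u : ℂ) * (X ω : ℂ)) ∂Px)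
      = fun u : ℝ => Complex.exp (T₁ u) := funext hchar
  rw [hcharfun] at hXd
  have hexp : HasDerivAt (fun u : ℝ => Complex.exp (T₁ u)) d 0 := by
    have := hTd.cexp
    simpa [hT0] using this
  have huniq : Complex.I * ((∫ ω, X ω ∂Px : ℝ) : ℂ) = d := hXd.unique hexp
  rw [hd, hC₁, hC₂] at huniq
  have hfinal : ((∫ ω, X ω ∂Px : ℝ) : ℂ)
      = ((m + lam * (((1 - Real.exp (-α * Δ)) / α
          + (Real.exp (-α * Δ) - 1) * ((1 - Real.exp (-α * ((j : ℝ) * Δ))) / α)) * Iξ) : ℝ) : ℂ) := by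
    apply mul_left_cancel₀ Complex.I_ne_zero
    rw [huniq, hD0]
    push_cast [Complex.real_smul]
    ring
  have hreal : (∫ ω, X ω ∂Px)
      = m + lam * (((1 - Real.exp (-α * Δ)) / α
          + (Real.exp (-α * Δ) - 1) * ((1 - Real.exp (-α * ((j : ℝ) * Δ))) / α)) * Iξ) := by
    exact_mod_cast hfinal
  rw [hreal, hE 1, hm, hIξ]
  have he1 : Real.exp (-(1 : ℕ) * α * Δ) = Real.exp (-α * Δ) := by norm_num
  have he2 : Real.exp (-(1 : ℕ) * α * (j : ℝ) * Δ) = Real.exp (-α * ((j : ℝ) * Δ)) := by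
    ring_nf
  rw [he1, he2]
  field_simp
  ring
end

section
/- Let α > 0, Δ > 0, j ∈ ℕ, λ ≥ 0 and μ, σ ∈ ℝ. Let ξ be a real random variable with E[ξ²] < ∞ and characteristic function φ, and set K₁(u) = ∫_{jΔ}^{(j+1)Δ} φ( u e^{−α((j+1)Δ − s)} ) ds, K₂(u) = ∫_0^{jΔ} φ( u (e^{−αΔ} − 1) e^{−α(jΔ − s)} ) ds, E_{j,k}(α) = (1 − e^{−kαΔ}) + (−1)^k (1 − e^{−αΔ})^k (1 − e^{−kαjΔ}), and T₁(u) = −λ(j+1)Δ + i μ e^{−αjΔ}(1 − e^{−αΔ}) u − (σ²/(4α)) E_{j,2}(α) u² + λ ( K₁(u) + K₂(u) ). If X is a real random variable with E[X²] < ∞ whose characteristic function is exp(T₁(u)), then, writing m = μ e^{−αjΔ}(1 − e^{−αΔ}) + (λ/α) E[ξ] E_{j,1}(α), one has E[X²] = (λ E[ξ²] + σ²) E_{j,2}(α)/(2α) + m²; equivalently Var(X) = (λ E[ξ²] + σ²) E_{j,2}(α)/(2α). -/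
open MeasureTheory Complex

namespace LRAux

lemma exp_deriv (x u : ℝ) :
    HasDerivAt (fun t : ℝ => Complex.exp (I * t * x)) (I * x * Complex.exp (I * u * x)) u := by
  have h1 : HasDerivAt (fun t : ℝ => (t : ℂ)) 1 u := by
    exact Complex.ofRealCLM.hasDerivAt (x := u)
  have h2 : HasDerivAt (fun t : ℝ => I * (t : ℂ) * x) (I * x) u := by
    simpa using (h1.const_mul I).mul_const (x : ℂ)
  have := h2.cexp
  convert this using 1
  ring

lemma abs_exp_I_mul (u x : ℝ) : ‖Complex.exp (I * u * x)‖ = 1 := by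
  rw [Complex.norm_exp]
  have : (I * (u:ℂ) * (x:ℂ)).re = 0 := by simp
  rw [this, Real.exp_zero]

lemma norm_exp_I_mul (u x : ℝ) : ‖Complex.exp (I * u * x)‖ = 1 := by
  exact abs_exp_I_mul u x

variable {W : Type*} [MeasurableSpace W] (P : Measure W) [IsFiniteMeasure P] (f : W → ℝ)

lemma f_int (hf : Measurable f) (hf2 : Integrable (fun w => f w ^ 2) P) : Integrable f P :=
  (((memLp_two_iff_integrable_sq hf.aestronglyMeasurable).2 hf2).mono_exponent
    (by norm_num)).integrable le_rfl

lemma meas_exp (hf : Measurable f) (u : ℝ) :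
    AEStronglyMeasurable (fun w => Complex.exp (I * u * f w)) P :=
  (Complex.measurable_exp.comp ((measurable_const.mul
    (Complex.measurable_ofReal.comp hf)))).aestronglyMeasurable

lemma meas_g (hf : Measurable f) (u : ℝ) :
    AEStronglyMeasurable (fun w => I * f w * Complex.exp (I * u * f w)) P := by
  apply AEStronglyMeasurable.mul _ (meas_exp P f hf u)
  exact ((measurable_const.mul (Complex.measurable_ofReal.comp hf))).aestronglyMeasurable

lemma charDeriv1 (hf : Measurable f) (hf2 : Integrable (fun w => f w ^ 2) P) (u : ℝ) :
    HasDerivAt (fun u : ℝ => ∫ w, Complex.exp (I * u * f w) ∂P)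
      (∫ w, I * f w * Complex.exp (I * u * f w) ∂P) u := by
  have := hasDerivAt_integral_of_dominated_loc_of_deriv_le (μ := P)
    (F := fun (u : ℝ) w => Complex.exp (I * u * f w))
    (F' := fun (u : ℝ) w => I * f w * Complex.exp (I * u * f w))
    (x₀ := u) (bound := fun w => |f w|) (Metric.ball_mem_nhds u one_pos)
    (Filter.Eventually.of_forall fun x => meas_exp P f hf x)
    ?_ (meas_g P f hf u) ?_ ?_ ?_
  · exact this.2
  · apply Integrable.mono' (integrable_const 1) (meas_exp P f hf u)
    exact Filter.Eventually.of_forall fun w => by rw [norm_exp_I_mul]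
  · refine Filter.Eventually.of_forall fun w x _ => ?_
    simp only [norm_mul, norm_exp_I_mul, Complex.norm_I, one_mul, mul_one, Complex.norm_real,
      Real.norm_eq_abs]
    exact le_rfl
  · exact (f_int P f hf hf2).abs
  · exact Filter.Eventually.of_forall fun w x _ => exp_deriv (f w) x

lemma charDeriv2 (hf : Measurable f) (hf2 : Integrable (fun w => f w ^ 2) P) (u : ℝ) :
    HasDerivAt (fun u : ℝ => ∫ w, I * f w * Complex.exp (I * u * f w) ∂P)
      (∫ w, -(f w : ℂ) ^ 2 * Complex.exp (I * u * f w) ∂P) u := by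
  have hm2 : ∀ x : ℝ, AEStronglyMeasurable (fun w => -(f w : ℂ) ^ 2 * Complex.exp (I * x * f w)) P := by
    intro x
    apply AEStronglyMeasurable.mul _ (meas_exp P f hf x)
    exact (((Complex.measurable_ofReal.comp hf).pow_const 2).neg).aestronglyMeasurable
  have := hasDerivAt_integral_of_dominated_loc_of_deriv_le (μ := P)
    (F := fun (u : ℝ) w => I * f w * Complex.exp (I * u * f w))
    (F' := fun (u : ℝ) w => -(f w : ℂ) ^ 2 * Complex.exp (I * u * f w))
    (x₀ := u) (bound := fun w => f w ^ 2) (Metric.ball_mem_nhds u one_pos)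
    (Filter.Eventually.of_forall fun x => meas_g P f hf x)
    ?_ (hm2 u) ?_ ?_ ?_
  · exact this.2
  · apply Integrable.mono' (f_int P f hf hf2).abs (meas_g P f hf u)
    refine Filter.Eventually.of_forall fun w => ?_
    simp [abs_exp_I_mul]
  · refine Filter.Eventually.of_forall fun w x _ => ?_
    rw [norm_mul, norm_neg, norm_pow, Complex.norm_real, Real.norm_eq_abs, norm_exp_I_mul,
      mul_one, _root_.sq_abs]
  · exact hf2
  · refine Filter.Eventually.of_forall fun w x _ => ?_
    have := (exp_deriv (f w) x).const_mul (I * (f w : ℂ))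
    exact this.congr_deriv (by
      linear_combination ((f w : ℂ) ^ 2 * Complex.exp (I * x * f w)) * Complex.I_mul_I)

lemma cont_h (hf : Measurable f) (hf2 : Integrable (fun w => f w ^ 2) P) :
    Continuous (fun u : ℝ => ∫ w, -(f w : ℂ) ^ 2 * Complex.exp (I * u * f w) ∂P) := by
  apply continuous_of_dominated (bound := fun w => f w ^ 2)
  · intro x
    apply AEStronglyMeasurable.mul _ (meas_exp P f hf x)
    exact (((Complex.measurable_ofReal.comp hf).pow_const 2).neg).aestronglyMeasurable
  · intro x
    refine Filter.Eventually.of_forall fun w => ?_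
    rw [norm_mul, norm_neg, norm_pow, Complex.norm_real, Real.norm_eq_abs, norm_exp_I_mul,
      mul_one, _root_.sq_abs]
  · exact hf2
  · refine Filter.Eventually.of_forall fun w => ?_
    apply Continuous.mul continuous_const
    exact Complex.continuous_exp.comp (by continuity)

end LRAux

namespace LRAux2

lemma intervalDeriv {ψ g : ℝ → ℂ} (hψ : ∀ t, HasDerivAt ψ (g t) t) (hgc : Continuous g)
    {B : ℝ} (hB : ∀ t, ‖g t‖ ≤ B)
    {c w : ℝ → ℝ} (hc : Continuous c) (hw : Continuous w)
    {a b : ℝ} (hab : a ≤ b) (hc1 : ∀ s ∈ Set.Ioc a b, |c s| ≤ 1)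
    (hw1 : ∀ s ∈ Set.Ioc a b, |w s| ≤ 1) (u₀ : ℝ) :
    HasDerivAt (fun u => ∫ s in a..b, (w s : ℂ) * ψ (u * c s))
      (∫ s in a..b, ((w s : ℂ) * c s) * g (u₀ * c s)) u₀ := by
  have hψc : Continuous ψ := by
    rw [continuous_iff_continuousAt]; exact fun t => (hψ t).continuousAt
  have hconv : ∀ F : ℝ → ℂ, (∫ s in a..b, F s) = ∫ s, F s ∂(volume.restrict (Set.Ioc a b)) :=
    fun F => intervalIntegral.integral_of_le hab
  haveI : IsFiniteMeasure (volume.restrict (Set.Ioc a b)) := by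
    constructor
    rw [Measure.restrict_apply_univ, Real.volume_Ioc]
    exact ENNReal.ofReal_lt_top
  have hB0 : 0 ≤ B := (norm_nonneg _).trans (hB 0)
  have key := hasDerivAt_integral_of_dominated_loc_of_deriv_le
    (μ := volume.restrict (Set.Ioc a b))
    (F := fun (u : ℝ) s => (w s : ℂ) * ψ (u * c s))
    (F' := fun (u : ℝ) s => ((w s : ℂ) * c s) * g (u * c s))
    (x₀ := u₀) (bound := fun _ => B) (Metric.ball_mem_nhds u₀ one_pos) ?_ ?_ ?_ ?_ (integrable_const B) ?_
  · have h2 := key.2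
    simp only [← hconv] at h2
    convert h2 using 2
  · refine Filter.Eventually.of_forall fun x => ?_
    exact (Continuous.mul (Complex.continuous_ofReal.comp hw)
      (hψc.comp (by continuity))).aestronglyMeasurable
  · apply Continuous.integrableOn_Ioc
    exact Continuous.mul (Complex.continuous_ofReal.comp hw) (hψc.comp (by continuity))
  · exact (Continuous.mul ((Complex.continuous_ofReal.comp hw).mul
      (Complex.continuous_ofReal.comp hc)) (hgc.comp (by continuity))).aestronglyMeasurable
  · refine (ae_restrict_iff' measurableSet_Ioc).2 (Filter.Eventually.of_forall fun s hsIoc => ?_)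
    intro x _
    have h1 := hw1 s hsIoc
    have h2 := hc1 s hsIoc
    have h3 := hB (x * c s)
    rw [norm_mul, norm_mul, Complex.norm_real, Complex.norm_real, Real.norm_eq_abs,
      Real.norm_eq_abs]
    have h4 : |w s| * |c s| ≤ 1 := by nlinarith [abs_nonneg (w s), abs_nonneg (c s)]
    calc |w s| * |c s| * ‖g (x * c s)‖ ≤ 1 * B :=
          mul_le_mul h4 h3 (norm_nonneg _) zero_le_one
      _ = B := one_mul B
  · refine Filter.Eventually.of_forall fun s x _ => ?_
    have hinner : HasDerivAt (fun u : ℝ => u * c s) (c s) x := by simpa using (hasDerivAt_id x).mul_const (c s)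
    have := ((hψ (x * c s)).scomp x hinner).const_mul (w s : ℂ)
    exact this.congr_deriv (by rw [real_smul]; ring)

end LRAux2

namespace LRAux3

lemma intExp {r : ℝ} (hr : 0 < r) (b' a b : ℝ) :
    ∫ s in a..b, Real.exp (-r * (b' - s))
      = (Real.exp (-r * (b' - b)) - Real.exp (-r * (b' - a))) / r := by
  have hAnti : ∀ s ∈ Set.uIcc a b,
      HasDerivAt (fun t => Real.exp (-r * (b' - t)) / r) (Real.exp (-r * (b' - s))) s := by
    intro s _
    have hlin : HasDerivAt (fun t : ℝ => -r * (b' - t)) r s := by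
      have := ((hasDerivAt_id s).const_sub b').const_mul (-r)
      exact this.congr_deriv (by ring)
    have := (hlin.exp).div_const r
    exact this.congr_deriv (by field_simp)
  have := intervalIntegral.integral_eq_sub_of_hasDerivAt hAnti
    ((Continuous.intervalIntegrable (by continuity)) a b)
  rw [this]
  ring

end LRAux3

namespace LRAux3
lemma valInt (c : ℝ → ℝ) (a b : ℝ) (z : ℂ) :
    (∫ s in a..b, ((c s : ℝ) : ℂ) * z) = ((∫ s in a..b, c s : ℝ) : ℂ) * z := by
  rw [← intervalIntegral.integral_ofReal, intervalIntegral.integral_mul_const]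
end LRAux3

lemma ofReal_hasDerivAt (u : ℝ) : HasDerivAt (fun t : ℝ => (t : ℂ)) 1 u := by
  exact Complex.ofRealCLM.hasDerivAt (x := u)

set_option maxHeartbeats 1000000 in
/-- Second moment and variance of the log-return of the mean-reverting
jump-diffusion model. -/
theorem logReturn_second_moment {Ω Ωx : Type*} [MeasurableSpace Ω] [MeasurableSpace Ωx]
    (P : Measure Ω) (Px : Measure Ωx)
    [IsProbabilityMeasure P] [IsProbabilityMeasure Px]
    (α Δ lam μ σ : ℝ) (j : ℕ) (hα : 0 < α) (hΔ : 0 < Δ) (hlam : 0 ≤ lam)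
    (ξ : Ω → ℝ) (hξmeas : Measurable ξ)
    (φ : ℝ → ℂ)
    (hφ : ∀ u : ℝ, φ u = ∫ ω, Complex.exp (Complex.I * (u : ℂ) * (ξ ω : ℂ)) ∂P)
    (K₁ K₂ : ℝ → ℂ)
    (hK₁ : ∀ u : ℝ, K₁ u =
      ∫ s in ((j : ℝ) * Δ)..(((j : ℝ) + 1) * Δ), φ (u * Real.exp (-α * (((j : ℝ) + 1) * Δ - s))))
    (hK₂ : ∀ u : ℝ, K₂ u =
      ∫ s in (0:ℝ)..((j : ℝ) * Δ),
        φ (u * (Real.exp (-α * Δ) - 1) * Real.exp (-α * ((j : ℝ) * Δ - s))))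
    (E : ℕ → ℝ)
    (hE : ∀ k : ℕ, E k = (1 - Real.exp (-(k : ℝ) * α * Δ))
        + (-1 : ℝ) ^ k * (1 - Real.exp (-α * Δ)) ^ k * (1 - Real.exp (-(k : ℝ) * α * (j : ℝ) * Δ)))
    (T₁ : ℝ → ℂ)
    (hT₁ : ∀ u : ℝ, T₁ u = -((lam * ((j : ℝ) + 1) * Δ : ℝ) : ℂ)
        + Complex.I * ((μ * Real.exp (-α * (j : ℝ) * Δ) * (1 - Real.exp (-α * Δ)) : ℝ) : ℂ) * (u : ℂ)
        - ((σ ^ 2 / (4 * α) * E 2 : ℝ) : ℂ) * (u : ℂ) ^ 2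
        + ((lam : ℝ) : ℂ) * (K₁ u + K₂ u))
    (X : Ωx → ℝ) (hXmeas : Measurable X)
    (hchar : ∀ u : ℝ, ∫ ω, Complex.exp (Complex.I * (u : ℂ) * (X ω : ℂ)) ∂Px = Complex.exp (T₁ u))
    (hξint : Integrable (fun ω => ξ ω ^ 2) P) (hXint : Integrable (fun ω => X ω ^ 2) Px)
    (m v : ℝ)
    (hm : m = μ * Real.exp (-α * (j : ℝ) * Δ) * (1 - Real.exp (-α * Δ))
        + lam / α * (∫ ω, ξ ω ∂P) * E 1)
    (hv : v = (lam * (∫ ω, ξ ω ^ 2 ∂P) + σ ^ 2) * E 2 / (2 * α)) :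
    (∫ ω, X ω ^ 2 ∂Px = v + m ^ 2) ∧ ProbabilityTheory.variance X Px = v := by
  classical
  have hj0 : (0 : ℝ) ≤ (j : ℝ) := Nat.cast_nonneg j
  have hab1 : ((j : ℝ) * Δ) ≤ (((j : ℝ) + 1) * Δ) := by nlinarith
  have hab2 : (0 : ℝ) ≤ ((j : ℝ) * Δ) := by positivity
  -- ξ-side characteristic function machinery
  set gF : ℝ → ℂ := fun u => ∫ ω, Complex.I * (ξ ω : ℂ) * Complex.exp (Complex.I * u * ξ ω) ∂P
    with hgFdef
  set hF : ℝ → ℂ := fun u => ∫ ω, -(ξ ω : ℂ) ^ 2 * Complex.exp (Complex.I * u * ξ ω) ∂P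
    with hhFdef
  have hφfun : φ = fun u : ℝ => ∫ ω, Complex.exp (Complex.I * u * ξ ω) ∂P := funext hφ
  have hφd : ∀ u, HasDerivAt φ (gF u) u := by
    rw [hφfun]; exact fun u => LRAux.charDeriv1 P ξ hξmeas hξint u
  have hgFd : ∀ u, HasDerivAt gF (hF u) u := fun u => LRAux.charDeriv2 P ξ hξmeas hξint u
  have hgFc : Continuous gF := continuous_iff_continuousAt.2 fun u => (hgFd u).continuousAt
  have hhFc : Continuous hF := LRAux.cont_h P ξ hξmeas hξint
  have hξabs : Integrable (fun ω => |ξ ω|) P := (LRAux.f_int P ξ hξmeas hξint).abs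
  have hB1 : ∀ t, ‖gF t‖ ≤ ∫ ω, |ξ ω| ∂P := by
    intro t
    refine norm_integral_le_of_norm_le hξabs (Filter.Eventually.of_forall fun w => ?_)
    rw [norm_mul, norm_mul, Complex.norm_I, one_mul, Complex.norm_real, Real.norm_eq_abs,
      LRAux.norm_exp_I_mul, mul_one]
  have hB2 : ∀ t, ‖hF t‖ ≤ ∫ ω, ξ ω ^ 2 ∂P := by
    intro t
    refine norm_integral_le_of_norm_le hξint (Filter.Eventually.of_forall fun w => ?_)
    rw [norm_mul, norm_neg, norm_pow, Complex.norm_real, Real.norm_eq_abs,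
      LRAux.norm_exp_I_mul, mul_one, _root_.sq_abs]
  -- bounds on the exponential kernels
  have hc1cont : Continuous (fun s : ℝ => Real.exp (-α * ((((j : ℝ) + 1) * Δ) - s))) :=
    Real.continuous_exp.comp (continuous_const.mul (continuous_const.sub continuous_id))
  have hc2cont : Continuous (fun s : ℝ => (Real.exp (-α * Δ) - 1) * Real.exp (-α * (((j : ℝ) * Δ) - s))) :=
    continuous_const.mul
      (Real.continuous_exp.comp (continuous_const.mul (continuous_const.sub continuous_id)))
  have hexp1 : (0 : ℝ) < Real.exp (-α * Δ) := Real.exp_pos _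
  have hexp2 : Real.exp (-α * Δ) < 1 := by
    rw [Real.exp_lt_one_iff]; nlinarith
  have hc1le : ∀ s ∈ Set.Ioc ((j : ℝ) * Δ) (((j : ℝ) + 1) * Δ), |Real.exp (-α * ((((j : ℝ) + 1) * Δ) - s))| ≤ 1 := by
    intro s hs
    rw [abs_of_pos (Real.exp_pos _), Real.exp_le_one_iff]
    nlinarith [hs.2]
  have hc2le : ∀ s ∈ Set.Ioc (0:ℝ) ((j : ℝ) * Δ), |(Real.exp (-α * Δ) - 1) * Real.exp (-α * (((j : ℝ) * Δ) - s))| ≤ 1 := by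
    intro s hs
    rw [abs_mul, abs_of_pos (Real.exp_pos _)]
    have h1 : |(Real.exp (-α * Δ) - 1)| ≤ 1 := by rw [abs_le]; constructor <;> nlinarith
    have h2 : Real.exp (-α * (((j : ℝ) * Δ) - s)) ≤ 1 := by
      rw [Real.exp_le_one_iff]; nlinarith [hs.2]
    nlinarith [abs_nonneg (Real.exp (-α * Δ) - 1), Real.exp_pos (-α * (((j : ℝ) * Δ) - s))]
  have hone : ∀ s ∈ Set.Ioc ((j : ℝ) * Δ) (((j : ℝ) + 1) * Δ), |(fun _ : ℝ => (1:ℝ)) s| ≤ 1 := fun s _ => by norm_num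
  -- derivatives of K₁, K₂ (in their explicit forms)
  set KA' : ℝ → ℂ := fun u => ∫ s in ((j : ℝ) * Δ)..(((j : ℝ) + 1) * Δ), ((Real.exp (-α * ((((j : ℝ) + 1) * Δ) - s)) : ℝ) : ℂ) * gF (u * Real.exp (-α * ((((j : ℝ) + 1) * Δ) - s))) with hKA'def
  set KB' : ℝ → ℂ := fun u => ∫ s in (0:ℝ)..((j : ℝ) * Δ), (((Real.exp (-α * Δ) - 1) * Real.exp (-α * (((j : ℝ) * Δ) - s)) : ℝ) : ℂ) * gF (u * ((Real.exp (-α * Δ) - 1) * Real.exp (-α * (((j : ℝ) * Δ) - s)))) with hKB'def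
  have hKAd : ∀ u, HasDerivAt (fun u => ∫ s in ((j : ℝ) * Δ)..(((j : ℝ) + 1) * Δ), φ (u * Real.exp (-α * ((((j : ℝ) + 1) * Δ) - s)))) (KA' u) u := by
    intro u
    have h := LRAux2.intervalDeriv hφd hgFc hB1 hc1cont (continuous_const : Continuous (fun _ : ℝ => (1:ℝ)))
      hab1 hc1le hone u
    simp only [Complex.ofReal_one, one_mul] at h
    exact h
  have hKBd : ∀ u, HasDerivAt (fun u => ∫ s in (0:ℝ)..((j : ℝ) * Δ), φ (u * ((Real.exp (-α * Δ) - 1) * Real.exp (-α * (((j : ℝ) * Δ) - s))))) (KB' u) u := by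
    intro u
    have h := LRAux2.intervalDeriv hφd hgFc hB1 hc2cont (continuous_const : Continuous (fun _ : ℝ => (1:ℝ)))
      hab2 hc2le (fun s _ => by norm_num) u
    simp only [Complex.ofReal_one, one_mul] at h
    exact h
  have hKA'd : HasDerivAt KA'
      (∫ s in ((j : ℝ) * Δ)..(((j : ℝ) + 1) * Δ), (((Real.exp (-α * ((((j : ℝ) + 1) * Δ) - s)) : ℝ) : ℂ) * ((Real.exp (-α * ((((j : ℝ) + 1) * Δ) - s)) : ℝ) : ℂ)) * hF ((0:ℝ) * Real.exp (-α * ((((j : ℝ) + 1) * Δ) - s)))) 0 := by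
    have h := LRAux2.intervalDeriv hgFd hhFc hB2 hc1cont hc1cont hab1 hc1le hc1le 0
    exact h
  have hKB'd : HasDerivAt KB'
      (∫ s in (0:ℝ)..((j : ℝ) * Δ), ((((Real.exp (-α * Δ) - 1) * Real.exp (-α * (((j : ℝ) * Δ) - s)) : ℝ) : ℂ) * (((Real.exp (-α * Δ) - 1) * Real.exp (-α * (((j : ℝ) * Δ) - s)) : ℝ) : ℂ)) * hF ((0:ℝ) * ((Real.exp (-α * Δ) - 1) * Real.exp (-α * (((j : ℝ) * Δ) - s))))) 0 := by
    have h := LRAux2.intervalDeriv hgFd hhFc hB2 hc2cont hc2cont hab2 hc2le hc2le 0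
    exact h
  -- explicit form of T₁
  have hTfun : T₁ = fun u : ℝ => -((lam * ((j : ℝ) + 1) * Δ : ℝ) : ℂ)
      + Complex.I * ((μ * Real.exp (-α * (j : ℝ) * Δ) * (1 - Real.exp (-α * Δ)) : ℝ) : ℂ) * (u : ℂ)
      - ((σ ^ 2 / (4 * α) * E 2 : ℝ) : ℂ) * (u : ℂ) ^ 2
      + ((lam : ℝ) : ℂ) * ((∫ s in ((j : ℝ) * Δ)..(((j : ℝ) + 1) * Δ), φ (u * Real.exp (-α * ((((j : ℝ) + 1) * Δ) - s))))
        + (∫ s in (0:ℝ)..((j : ℝ) * Δ), φ (u * ((Real.exp (-α * Δ) - 1) * Real.exp (-α * (((j : ℝ) * Δ) - s)))))) := by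
    funext u
    have hre : (∫ s in (0:ℝ)..((j : ℝ) * Δ),
          φ (u * (Real.exp (-α * Δ) - 1) * Real.exp (-α * (((j : ℝ) * Δ) - s))))
        = ∫ s in (0:ℝ)..((j : ℝ) * Δ),
          φ (u * ((Real.exp (-α * Δ) - 1) * Real.exp (-α * (((j : ℝ) * Δ) - s)))) :=
      intervalIntegral.integral_congr fun s _ => by rw [mul_assoc]
    rw [hT₁ u, hK₁ u, hK₂ u, hre]
  set DD1 : ℝ → ℂ := fun u : ℝ => Complex.I * ((μ * Real.exp (-α * (j : ℝ) * Δ) * (1 - Real.exp (-α * Δ)) : ℝ) : ℂ) - 2 * ((σ ^ 2 / (4 * α) * E 2 : ℝ) : ℂ) * (u : ℂ)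
      + ((lam : ℝ) : ℂ) * (KA' u + KB' u) with hDD1def
  have hTd : ∀ u, HasDerivAt T₁ (DD1 u) u := by
    rw [hTfun]
    intro u
    have h0 : HasDerivAt (fun _ : ℝ => -((lam * ((j : ℝ) + 1) * Δ : ℝ) : ℂ)) 0 u :=
      hasDerivAt_const _ _
    have hlin : HasDerivAt (fun u : ℝ => Complex.I * ((μ * Real.exp (-α * (j : ℝ) * Δ) * (1 - Real.exp (-α * Δ)) : ℝ) : ℂ) * (u : ℂ))
        (Complex.I * ((μ * Real.exp (-α * (j : ℝ) * Δ) * (1 - Real.exp (-α * Δ)) : ℝ) : ℂ)) u := by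
      simpa only [mul_one] using (ofReal_hasDerivAt u).const_mul (Complex.I * ((μ * Real.exp (-α * (j : ℝ) * Δ) * (1 - Real.exp (-α * Δ)) : ℝ) : ℂ))
    have hsq0 : HasDerivAt (fun t : ℝ => ((t : ℂ)) ^ 2) (2 * (u : ℂ)) u := by
      have hmul := (ofReal_hasDerivAt u).mul (ofReal_hasDerivAt u)
      rw [show (fun t : ℝ => ((t : ℂ)) ^ 2) = fun t : ℝ => (t : ℂ) * (t : ℂ) from
        funext fun t => pow_two _]
      exact hmul.congr_deriv (by ring)
    have hsq : HasDerivAt (fun u : ℝ => ((σ ^ 2 / (4 * α) * E 2 : ℝ) : ℂ) * (u : ℂ) ^ 2) (((σ ^ 2 / (4 * α) * E 2 : ℝ) : ℂ) * (2 * (u:ℂ))) u :=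
      hsq0.const_mul _
    have := ((h0.add hlin).sub hsq).add (((hKAd u).add (hKBd u)).const_mul ((lam : ℝ) : ℂ))
    exact this.congr_deriv (by rw [hDD1def]; ring)
  set DD2 : ℂ := -(2 * ((σ ^ 2 / (4 * α) * E 2 : ℝ) : ℂ))
      + ((lam : ℝ) : ℂ) * ((∫ s in ((j : ℝ) * Δ)..(((j : ℝ) + 1) * Δ), (((Real.exp (-α * ((((j : ℝ) + 1) * Δ) - s)) : ℝ) : ℂ) * ((Real.exp (-α * ((((j : ℝ) + 1) * Δ) - s)) : ℝ) : ℂ)) * hF ((0:ℝ) * Real.exp (-α * ((((j : ℝ) + 1) * Δ) - s))))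
        + (∫ s in (0:ℝ)..((j : ℝ) * Δ), ((((Real.exp (-α * Δ) - 1) * Real.exp (-α * (((j : ℝ) * Δ) - s)) : ℝ) : ℂ) * (((Real.exp (-α * Δ) - 1) * Real.exp (-α * (((j : ℝ) * Δ) - s)) : ℝ) : ℂ)) * hF ((0:ℝ) * ((Real.exp (-α * Δ) - 1) * Real.exp (-α * (((j : ℝ) * Δ) - s)))))) with hDD2def
  have hDD1d : HasDerivAt DD1 DD2 0 := by
    rw [hDD1def]
    have h0 : HasDerivAt (fun _ : ℝ => Complex.I * ((μ * Real.exp (-α * (j : ℝ) * Δ) * (1 - Real.exp (-α * Δ)) : ℝ) : ℂ)) 0 (0:ℝ) := hasDerivAt_const _ _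
    have hlin : HasDerivAt (fun u : ℝ => 2 * ((σ ^ 2 / (4 * α) * E 2 : ℝ) : ℂ) * (u : ℂ)) (2 * ((σ ^ 2 / (4 * α) * E 2 : ℝ) : ℂ)) (0:ℝ) := by
      simpa only [mul_one] using (ofReal_hasDerivAt 0).const_mul (2 * ((σ ^ 2 / (4 * α) * E 2 : ℝ) : ℂ))
    have := (h0.sub hlin).add ((hKA'd.add hKB'd).const_mul ((lam : ℝ) : ℂ))
    exact this.congr_deriv (by rw [hDD2def]; ring)
  -- X-side
  set gX : ℝ → ℂ := fun u => ∫ ω, Complex.I * (X ω : ℂ) * Complex.exp (Complex.I * u * X ω) ∂Px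
    with hgXdef
  set hX : ℝ → ℂ := fun u => ∫ ω, -(X ω : ℂ) ^ 2 * Complex.exp (Complex.I * u * X ω) ∂Px
    with hhXdef
  have hXfun : (fun u : ℝ => ∫ ω, Complex.exp (Complex.I * u * X ω) ∂Px)
      = fun u => Complex.exp (T₁ u) := funext hchar
  have hgXd : ∀ u, HasDerivAt (fun u => Complex.exp (T₁ u)) (gX u) u := by
    rw [← hXfun]; exact fun u => LRAux.charDeriv1 Px X hXmeas hXint u
  have hgXd2 : ∀ u, HasDerivAt gX (hX u) u := fun u => LRAux.charDeriv2 Px X hXmeas hXint u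
  have hTexp : ∀ u, HasDerivAt (fun u => Complex.exp (T₁ u)) (Complex.exp (T₁ u) * DD1 u) u :=
    fun u => (hTd u).cexp
  have huniq : gX = fun u => Complex.exp (T₁ u) * DD1 u :=
    funext fun u => (hgXd u).unique (hTexp u)
  have h2 : HasDerivAt (fun u => Complex.exp (T₁ u) * DD1 u)
      (Complex.exp (T₁ 0) * DD1 0 * DD1 0 + Complex.exp (T₁ 0) * DD2) 0 :=
    (hTexp 0).mul hDD1d
  have heq2 : hX 0 = Complex.exp (T₁ 0) * DD1 0 * DD1 0 + Complex.exp (T₁ 0) * DD2 := by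
    have h3 := hgXd2 0
    rw [huniq] at h3
    exact h3.unique h2
  have heq1 : gX 0 = Complex.exp (T₁ 0) * DD1 0 := congrFun huniq 0
  -- T₁ 0 = 0
  have hφ0 : φ 0 = 1 := by
    rw [hφ 0]; simp
  have hT0 : T₁ 0 = 0 := by
    rw [hT₁ 0, hK₁ 0, hK₂ 0]
    simp only [zero_mul, hφ0, Complex.ofReal_zero, mul_zero, intervalIntegral.integral_const,
      smul_eq_mul, mul_one, ne_eq, OfNat.ofNat_ne_zero, not_false_eq_true, zero_pow, sub_zero,
      Complex.real_smul]
    push_cast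
    ring
    -- values at 0
  have hgF0 : gF 0 = Complex.I * (((∫ ω, ξ ω ∂P) : ℝ) : ℂ) := by
    rw [hgFdef]
    simp only [Complex.ofReal_zero, mul_zero, zero_mul, Complex.exp_zero, mul_one]
    rw [integral_const_mul,
      show (∫ ω, ((ξ ω : ℝ) : ℂ) ∂P) = (((∫ ω, ξ ω ∂P) : ℝ) : ℂ) from integral_ofReal]
  have hhF0 : hF 0 = -(((∫ ω, ξ ω ^ 2 ∂P) : ℝ) : ℂ) := by
    rw [hhFdef]
    simp only [Complex.ofReal_zero, mul_zero, zero_mul, Complex.exp_zero, mul_one]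
    rw [show (fun ω => -((ξ ω : ℂ)) ^ 2) = fun ω => ((-(ξ ω ^ 2) : ℝ) : ℂ) from
      funext fun ω => by push_cast; ring]
    rw [show (∫ ω, ((-(ξ ω ^ 2) : ℝ) : ℂ) ∂P) = (((∫ ω, -(ξ ω ^ 2) ∂P) : ℝ) : ℂ) from
      integral_ofReal, integral_neg]
    push_cast
    ring
  have hgX0 : gX 0 = Complex.I * (((∫ ω, X ω ∂Px) : ℝ) : ℂ) := by
    rw [hgXdef]
    simp only [Complex.ofReal_zero, mul_zero, zero_mul, Complex.exp_zero, mul_one]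
    rw [integral_const_mul,
      show (∫ ω, ((X ω : ℝ) : ℂ) ∂Px) = (((∫ ω, X ω ∂Px) : ℝ) : ℂ) from integral_ofReal]
  have hhX0 : hX 0 = -(((∫ ω, X ω ^ 2 ∂Px) : ℝ) : ℂ) := by
    rw [hhXdef]
    simp only [Complex.ofReal_zero, mul_zero, zero_mul, Complex.exp_zero, mul_one]
    rw [show (fun ω => -((X ω : ℂ)) ^ 2) = fun ω => ((-(X ω ^ 2) : ℝ) : ℂ) from
      funext fun ω => by push_cast; ring]
    rw [show (∫ ω, ((-(X ω ^ 2) : ℝ) : ℂ) ∂Px) = (((∫ ω, -(X ω ^ 2) ∂Px) : ℝ) : ℂ) from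
      integral_ofReal, integral_neg]
    push_cast
    ring
  -- explicit exponential integrals
  have h2α : (0:ℝ) < 2 * α := by linarith
  have hintC1 : (∫ s in ((j : ℝ) * Δ)..(((j : ℝ) + 1) * Δ), Real.exp (-α * ((((j : ℝ) + 1) * Δ) - s))) = (1 - Real.exp (-(α * Δ))) / α := by
    rw [LRAux3.intExp hα]
    rw [show -α * ((((j : ℝ) + 1) * Δ) - (((j : ℝ) + 1) * Δ)) = 0 by ring, show -α * ((((j : ℝ) + 1) * Δ) - ((j : ℝ) * Δ)) = -(α * Δ) by ring,
      Real.exp_zero]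
  have hintC1sq : (∫ s in ((j : ℝ) * Δ)..(((j : ℝ) + 1) * Δ), Real.exp (-α * ((((j : ℝ) + 1) * Δ) - s)) * Real.exp (-α * ((((j : ℝ) + 1) * Δ) - s))) = (1 - Real.exp (-(2 * (α * Δ)))) / (2 * α) := by
    rw [intervalIntegral.integral_congr (g := fun s => Real.exp (-(2 * α) * ((((j : ℝ) + 1) * Δ) - s)))
      (fun s _ => by rw [← Real.exp_add]; congr 1; ring)]
    rw [LRAux3.intExp h2α]
    rw [show -(2 * α) * ((((j : ℝ) + 1) * Δ) - (((j : ℝ) + 1) * Δ)) = 0 by ring,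
      show -(2 * α) * ((((j : ℝ) + 1) * Δ) - ((j : ℝ) * Δ)) = -(2 * (α * Δ)) by ring, Real.exp_zero]
  have hintC2 : (∫ s in (0:ℝ)..((j : ℝ) * Δ), (Real.exp (-α * Δ) - 1) * Real.exp (-α * (((j : ℝ) * Δ) - s))) = (Real.exp (-α * Δ) - 1) * ((1 - Real.exp (-(α * (((j : ℝ) * Δ))))) / α) := by
    rw [intervalIntegral.integral_const_mul, LRAux3.intExp hα]
    rw [show -α * (((j : ℝ) * Δ) - ((j : ℝ) * Δ)) = 0 by ring, show -α * (((j : ℝ) * Δ) - 0) = -(α * (((j : ℝ) * Δ))) by ring,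
      Real.exp_zero]
  have hintC2sq : (∫ s in (0:ℝ)..((j : ℝ) * Δ), ((Real.exp (-α * Δ) - 1) * Real.exp (-α * (((j : ℝ) * Δ) - s))) * ((Real.exp (-α * Δ) - 1) * Real.exp (-α * (((j : ℝ) * Δ) - s))))
      = (Real.exp (-α * Δ) - 1) * (Real.exp (-α * Δ) - 1) * ((1 - Real.exp (-(2 * (α * (((j : ℝ) * Δ)))))) / (2 * α)) := by
    rw [intervalIntegral.integral_congr
      (g := fun s => ((Real.exp (-α * Δ) - 1) * (Real.exp (-α * Δ) - 1)) * Real.exp (-(2 * α) * (((j : ℝ) * Δ) - s)))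
      (fun s _ => by rw [mul_mul_mul_comm, ← Real.exp_add]; congr 1; ring)]
    rw [intervalIntegral.integral_const_mul, LRAux3.intExp h2α]
    rw [show -(2 * α) * (((j : ℝ) * Δ) - ((j : ℝ) * Δ)) = 0 by ring,
      show -(2 * α) * (((j : ℝ) * Δ) - 0) = -(2 * (α * (((j : ℝ) * Δ)))) by ring, Real.exp_zero]
  -- values of the K-derivatives at 0
  have hKA'0 : KA' 0 = ((((1 - Real.exp (-(α * Δ))) / α) : ℝ) : ℂ) * (Complex.I * (((∫ ω, ξ ω ∂P) : ℝ) : ℂ)) := by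
    rw [hKA'def]
    simp only [zero_mul]
    rw [hgF0, LRAux3.valInt, hintC1]
  have hKB'0 : KB' 0 = ((((Real.exp (-α * Δ) - 1) * ((1 - Real.exp (-(α * ((j : ℝ) * Δ)))) / α)) : ℝ) : ℂ) * (Complex.I * (((∫ ω, ξ ω ∂P) : ℝ) : ℂ)) := by
    rw [hKB'def]
    simp only [zero_mul]
    rw [hgF0, LRAux3.valInt, hintC2]
  have hKA''0 : (∫ s in ((j : ℝ) * Δ)..(((j : ℝ) + 1) * Δ), (((Real.exp (-α * ((((j : ℝ) + 1) * Δ) - s)) : ℝ) : ℂ) * ((Real.exp (-α * ((((j : ℝ) + 1) * Δ) - s)) : ℝ) : ℂ)) * hF ((0:ℝ) * Real.exp (-α * ((((j : ℝ) + 1) * Δ) - s))))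
      = ((((1 - Real.exp (-(2 * (α * Δ)))) / (2 * α)) : ℝ) : ℂ) * (-(((∫ ω, ξ ω ^ 2 ∂P) : ℝ) : ℂ)) := by
    simp only [zero_mul, ← Complex.ofReal_mul]
    rw [hhF0, LRAux3.valInt, hintC1sq]
  have hKB''0 : (∫ s in (0:ℝ)..((j : ℝ) * Δ), ((((Real.exp (-α * Δ) - 1) * Real.exp (-α * (((j : ℝ) * Δ) - s)) : ℝ) : ℂ) * (((Real.exp (-α * Δ) - 1) * Real.exp (-α * (((j : ℝ) * Δ) - s)) : ℝ) : ℂ)) * hF ((0:ℝ) * ((Real.exp (-α * Δ) - 1) * Real.exp (-α * (((j : ℝ) * Δ) - s)))))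
      = ((((Real.exp (-α * Δ) - 1) * (Real.exp (-α * Δ) - 1) * ((1 - Real.exp (-(2 * (α * ((j : ℝ) * Δ))))) / (2 * α))) : ℝ) : ℂ) * (-(((∫ ω, ξ ω ^ 2 ∂P) : ℝ) : ℂ)) := by
    simp only [zero_mul, ← Complex.ofReal_mul]
    rw [hhF0, LRAux3.valInt, hintC2sq]
  have hDD10 : DD1 0 = Complex.I * ((((μ * Real.exp (-α * (j : ℝ) * Δ) * (1 - Real.exp (-α * Δ)) : ℝ) + lam * (((1 - Real.exp (-(α * Δ))) / α) * (∫ ω, ξ ω ∂P) + ((Real.exp (-α * Δ) - 1) * ((1 - Real.exp (-(α * ((j : ℝ) * Δ)))) / α)) * (∫ ω, ξ ω ∂P))) : ℝ) : ℂ) := by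
    rw [hDD1def]
    simp only [Complex.ofReal_zero, mul_zero, sub_zero]
    rw [hKA'0, hKB'0]
    push_cast
    ring
  have hDD2v : DD2 = ((-(2 * (σ ^ 2 / (4 * α) * E 2) + lam * (((1 - Real.exp (-(2 * (α * Δ)))) / (2 * α)) * (∫ ω, ξ ω ^ 2 ∂P) + ((Real.exp (-α * Δ) - 1) * (Real.exp (-α * Δ) - 1) * ((1 - Real.exp (-(2 * (α * ((j : ℝ) * Δ))))) / (2 * α))) * (∫ ω, ξ ω ^ 2 ∂P))) : ℝ) : ℂ) := by
    rw [hDD2def, hKA''0, hKB''0]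
    push_cast
    ring
  -- extract the real moment identities
  have hEX : (∫ ω, X ω ∂Px) = ((μ * Real.exp (-α * (j : ℝ) * Δ) * (1 - Real.exp (-α * Δ)) : ℝ) + lam * (((1 - Real.exp (-(α * Δ))) / α) * (∫ ω, ξ ω ∂P) + ((Real.exp (-α * Δ) - 1) * ((1 - Real.exp (-(α * ((j : ℝ) * Δ)))) / α)) * (∫ ω, ξ ω ∂P))) := by
    have h4 := heq1
    rw [hgX0, hT0, Complex.exp_zero, one_mul, hDD10] at h4
    exact_mod_cast mul_left_cancel₀ Complex.I_ne_zero h4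
  have hEX2 : (∫ ω, X ω ^ 2 ∂Px) = ((μ * Real.exp (-α * (j : ℝ) * Δ) * (1 - Real.exp (-α * Δ)) : ℝ) + lam * (((1 - Real.exp (-(α * Δ))) / α) * (∫ ω, ξ ω ∂P) + ((Real.exp (-α * Δ) - 1) * ((1 - Real.exp (-(α * ((j : ℝ) * Δ)))) / α)) * (∫ ω, ξ ω ∂P))) ^ 2 + (2 * (σ ^ 2 / (4 * α) * E 2) + lam * (((1 - Real.exp (-(2 * (α * Δ)))) / (2 * α)) * (∫ ω, ξ ω ^ 2 ∂P) + ((Real.exp (-α * Δ) - 1) * (Real.exp (-α * Δ) - 1) * ((1 - Real.exp (-(2 * (α * ((j : ℝ) * Δ))))) / (2 * α))) * (∫ ω, ξ ω ^ 2 ∂P))) := by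
    have h5 := heq2
    rw [hhX0, hT0, Complex.exp_zero, one_mul, hDD10, hDD2v] at h5
    have h7 : Complex.I * ((((μ * Real.exp (-α * (j : ℝ) * Δ) * (1 - Real.exp (-α * Δ)) : ℝ) + lam * (((1 - Real.exp (-(α * Δ))) / α) * (∫ ω, ξ ω ∂P) + ((Real.exp (-α * Δ) - 1) * ((1 - Real.exp (-(α * ((j : ℝ) * Δ)))) / α)) * (∫ ω, ξ ω ∂P))) : ℝ) : ℂ) * (Complex.I * ((((μ * Real.exp (-α * (j : ℝ) * Δ) * (1 - Real.exp (-α * Δ)) : ℝ) + lam * (((1 - Real.exp (-(α * Δ))) / α) * (∫ ω, ξ ω ∂P) + ((Real.exp (-α * Δ) - 1) * ((1 - Real.exp (-(α * ((j : ℝ) * Δ)))) / α)) * (∫ ω, ξ ω ∂P))) : ℝ) : ℂ))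
        = -(((((μ * Real.exp (-α * (j : ℝ) * Δ) * (1 - Real.exp (-α * Δ)) : ℝ) + lam * (((1 - Real.exp (-(α * Δ))) / α) * (∫ ω, ξ ω ∂P) + ((Real.exp (-α * Δ) - 1) * ((1 - Real.exp (-(α * ((j : ℝ) * Δ)))) / α)) * (∫ ω, ξ ω ∂P))) ^ 2 : ℝ)) : ℂ) := by
      rw [mul_mul_mul_comm, Complex.I_mul_I]
      push_cast
      ring
    rw [h7] at h5
    have h8 : (((∫ ω, X ω ^ 2 ∂Px) : ℝ) : ℂ) = ((((μ * Real.exp (-α * (j : ℝ) * Δ) * (1 - Real.exp (-α * Δ)) : ℝ) + lam * (((1 - Real.exp (-(α * Δ))) / α) * (∫ ω, ξ ω ∂P) + ((Real.exp (-α * Δ) - 1) * ((1 - Real.exp (-(α * ((j : ℝ) * Δ)))) / α)) * (∫ ω, ξ ω ∂P))) ^ 2 + (2 * (σ ^ 2 / (4 * α) * E 2) + lam * (((1 - Real.exp (-(2 * (α * Δ)))) / (2 * α)) * (∫ ω, ξ ω ^ 2 ∂P) + ((Real.exp (-α * Δ) - 1) * (Real.exp (-α * Δ) - 1) * ((1 -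 Real.exp (-(2 * (α * ((j : ℝ) * Δ))))) / (2 * α))) * (∫ ω, ξ ω ^ 2 ∂P))) : ℝ) : ℂ) := by
      push_cast at h5 ⊢
      linear_combination -h5
    exact_mod_cast h8
  -- final algebra
  have hSm : ((μ * Real.exp (-α * (j : ℝ) * Δ) * (1 - Real.exp (-α * Δ)) : ℝ) + lam * (((1 - Real.exp (-(α * Δ))) / α) * (∫ ω, ξ ω ∂P) + ((Real.exp (-α * Δ) - 1) * ((1 - Real.exp (-(α * ((j : ℝ) * Δ)))) / α)) * (∫ ω, ξ ω ∂P))) = m := by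
    rw [hm, hE 1]
    push_cast
    field_simp
    ring_nf
  have hfinal : (∫ ω, X ω ^ 2 ∂Px) = v + m ^ 2 := by
    rw [hEX2, hSm, hv, hE 2]
    push_cast
    field_simp
    ring_nf
  refine ⟨hfinal, ?_⟩
  have hmem : MemLp X 2 Px := (memLp_two_iff_integrable_sq hXmeas.aestronglyMeasurable).2 hXint
  rw [ProbabilityTheory.variance_eq_sub hmem]
  simp only [Pi.pow_apply]
  rw [hfinal, hEX, hSm]
  ring
end

section
/- Let α > 0, Δ > 0, j ∈ ℕ, λ ≥ 0 and μ, σ ∈ ℝ. Let ξ be a real random variable with E[|ξ|³] < ∞ and characteristic function φ, and set K₁(u) = ∫_{jΔ}^{(j+1)Δ} φ( u e^{−α((j+1)Δ − s)} ) ds, K₂(u) = ∫_0^{jΔ} φ( u (e^{−αΔ} − 1) e^{−α(jΔ − s)} ) ds, E_{j,k}(α) = (1 − e^{−kαΔ}) + (−1)^k (1 − e^{−αΔ})^k (1 − e^{−kαjΔ}), and T₁(u) = −λ(j+1)Δ + i μ e^{−αjΔ}(1 − e^{−αΔ}) u − (σ²/(4α)) E_{j,2}(α) u² + λ ( K₁(u)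 + K₂(u) ). If X is a real random variable with E[|X|³] < ∞ whose characteristic function is exp(T₁(u)), then, writing m = μ e^{−αjΔ}(1 − e^{−αΔ}) + (λ/α) E[ξ] E_{j,1}(α) and v = (λ E[ξ²] + σ²) E_{j,2}(α)/(2α), one has E[X³] = λ E[ξ³] E_{j,3}(α)/(3α) + 3 m v + m³. -/
open MeasureTheory Complex intervalIntegral

noncomputable def cf {Ω : Type*} [MeasurableSpace Ω] (P : Measure Ω) (Y : Ω → ℝ) (k : ℕ) (u : ℝ) : ℂ :=
  ∫ ω, (I * Y ω)^k * Complex.exp (I * u * Y ω) ∂P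

noncomputable def cfInt {Ω : Type*} [MeasurableSpace Ω] (P : Measure Ω) (Y : Ω → ℝ)
    (a b : ℝ) (g : ℝ → ℝ) (k : ℕ) (u : ℝ) : ℂ :=
  ∫ s in a..b, ((g s : ℂ))^k * cf P Y k (u * g s)

section CFlayer

variable {Ω : Type*} [MeasurableSpace Ω] {P : Measure Ω} [IsProbabilityMeasure P] {Y : Ω → ℝ}

lemma kernel_norm (x y : ℝ) (k : ℕ) : ‖(I * (y:ℂ))^k * Complex.exp (I * x * y)‖ = |y|^k := by
  simp [map_mul, map_pow, Complex.norm_exp]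

lemma kernel_hasDerivAt (u y : ℝ) (k : ℕ) :
    HasDerivAt (fun x : ℝ => (I * (y:ℂ))^k * Complex.exp (I * x * y))
      ((I * (y:ℂ))^(k+1) * Complex.exp (I * u * y)) u := by
  have h : ∀ x : ℝ, Complex.exp (I * x * y) = Complex.exp ((I*y) * x) := fun x => by ring_nf
  have h1 : HasDerivAt (fun x : ℝ => Complex.exp (I * x * y)) ((I * y) * Complex.exp (I * u * y)) u := by
    simp_rw [h]
    simpa [mul_comm] using (((hasDerivAt_id (u:ℂ)).const_mul (I*(y:ℂ))).cexp).comp_ofReal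
  simpa [pow_succ, mul_comm, mul_assoc, mul_left_comm] using h1.const_mul ((I * (y:ℂ))^k)

lemma kernel_cont (y : ℝ) (k : ℕ) :
    Continuous (fun x : ℝ => (I * (y:ℂ))^k * Complex.exp (I * x * y)) := by
  apply Continuous.mul continuous_const
  exact Complex.continuous_exp.comp (by continuity)

lemma kernel_cont' (x : ℝ) (k : ℕ) :
    Continuous (fun y : ℝ => (I * (y:ℂ))^k * Complex.exp (I * x * y)) := by
  apply Continuous.mul (by continuity)
  exact Complex.continuous_exp.comp (by continuity)

omit [IsProbabilityMeasure P] in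
lemma kernel_meas (hY : Measurable Y) (k : ℕ) (x : ℝ) :
    AEStronglyMeasurable (fun ω => (I * (Y ω:ℂ))^k * Complex.exp (I * x * Y ω)) P :=
  ((kernel_cont' x k).measurable.comp hY).aestronglyMeasurable

lemma abs_pow_integrable (hY : Measurable Y) (h3 : Integrable (fun ω => |Y ω|^3) P)
    {k : ℕ} (hk : k ≤ 3) : Integrable (fun ω => |Y ω|^k) P := by
  refine ((integrable_const (1:ℝ)).add h3).mono'
    ((hY.abs.pow_const k).aestronglyMeasurable) (ae_of_all _ fun ω => ?_)
  rw [Real.norm_of_nonneg (pow_nonneg (abs_nonneg _) k)]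
  show |Y ω|^k ≤ 1 + |Y ω|^3
  rcases le_total (|Y ω|) 1 with h | h
  · have h1 : |Y ω|^k ≤ 1 := pow_le_one₀ (abs_nonneg _) h
    nlinarith [pow_nonneg (abs_nonneg (Y ω)) 3]
  · have h1 : |Y ω|^k ≤ |Y ω|^3 := pow_le_pow_right₀ h hk
    linarith

lemma kernel_integrable (hY : Measurable Y) (h3 : Integrable (fun ω => |Y ω|^3) P)
    {k : ℕ} (hk : k ≤ 3) (x : ℝ) :
    Integrable (fun ω => (I * (Y ω:ℂ))^k * Complex.exp (I * x * Y ω)) P := by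
  refine (abs_pow_integrable hY h3 hk).mono' (kernel_meas hY k x) (ae_of_all _ fun ω => ?_)
  rw [kernel_norm]

lemma cf_hasDerivAt (hY : Measurable Y) (h3 : Integrable (fun ω => |Y ω|^3) P)
    {k : ℕ} (hk : k ≤ 2) (u : ℝ) :
    HasDerivAt (cf P Y k) (cf P Y (k+1) u) u := by
  have hk1 : k + 1 ≤ 3 := by omega
  exact (hasDerivAt_integral_of_dominated_loc_of_deriv_le (𝕜 := ℝ) (μ := P)
    (F := fun x ω => (I * (Y ω:ℂ))^k * Complex.exp (I * x * Y ω))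
    (F' := fun x ω => (I * (Y ω:ℂ))^(k+1) * Complex.exp (I * x * Y ω))
    (bound := fun ω => |Y ω|^(k+1)) (x₀ := u) (Metric.ball_mem_nhds u one_pos)
    (Filter.Eventually.of_forall fun x => kernel_meas hY k x)
    (kernel_integrable hY h3 (by omega) u)
    (kernel_meas hY (k+1) u)
    (ae_of_all _ fun ω x _ => le_of_eq (kernel_norm x (Y ω) (k+1)))
    (abs_pow_integrable hY h3 hk1)
    (ae_of_all _ fun ω x _ => kernel_hasDerivAt x (Y ω) k)).2

omit [IsProbabilityMeasure P] in
lemma cf_norm_le {k : ℕ} (u : ℝ) :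
    ‖cf P Y k u‖ ≤ ∫ ω, |Y ω|^k ∂P := by
  refine (MeasureTheory.norm_integral_le_integral_norm _).trans (le_of_eq ?_)
  exact integral_congr_ae (ae_of_all _ fun ω => kernel_norm u (Y ω) k)

lemma cf_continuous (hY : Measurable Y) (h3 : Integrable (fun ω => |Y ω|^3) P)
    {k : ℕ} (hk : k ≤ 3) : Continuous (cf P Y k) := by
  exact continuous_of_dominated
    (fun x => kernel_meas hY k x)
    (fun x => ae_of_all _ fun ω => le_of_eq (kernel_norm x (Y ω) k))
    (abs_pow_integrable hY h3 hk)
    (ae_of_all _ fun ω => kernel_cont (Y ω) k)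

omit [IsProbabilityMeasure P] in
lemma cf_zero {k : ℕ} : cf P Y k 0 = I^k * ((∫ ω, (Y ω)^k ∂P : ℝ) : ℂ) := by
  have h : ∀ ω, (I * (Y ω:ℂ))^k * Complex.exp (I * ((0:ℝ):ℂ) * Y ω) = I^k * (((Y ω)^k : ℝ):ℂ) := by
    intro ω; push_cast; rw [mul_pow]; simp
  rw [cf, integral_congr_ae (ae_of_all _ h), MeasureTheory.integral_const_mul]
  congr 1
  exact integral_ofReal

lemma cfInt_hasDerivAt (hY : Measurable Y) (h3 : Integrable (fun ω => |Y ω|^3) P)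
    {a b : ℝ} {g : ℝ → ℝ} (hgc : Continuous g) (hg1 : ∀ s ∈ Set.uIoc a b, |g s| ≤ 1)
    {k : ℕ} (hk : k ≤ 2) (u : ℝ) :
    HasDerivAt (cfInt P Y a b g k) (cfInt P Y a b g (k+1) u) u := by
  have hk1 : (k:ℕ) + 1 ≤ 3 := by omega
  have hcontk : ∀ (x : ℝ) (n : ℕ), n ≤ 3 →
      Continuous (fun s => ((g s : ℂ))^n * cf P Y n (x * g s)) := fun x n hn =>
    ((Complex.continuous_ofReal.comp hgc).pow n).mul
      ((cf_continuous hY h3 hn).comp (continuous_const.mul hgc))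
  refine (intervalIntegral.hasDerivAt_integral_of_dominated_loc_of_deriv_le (𝕜 := ℝ)
    (F := fun x s => ((g s : ℂ))^k * cf P Y k (x * g s))
    (F' := fun x s => ((g s : ℂ))^(k+1) * cf P Y (k+1) (x * g s))
    (bound := fun _ => ∫ ω, |Y ω|^(k+1) ∂P) (s := Metric.ball u 1) (Metric.ball_mem_nhds u one_pos)
    (Filter.Eventually.of_forall fun x =>
      ((hcontk x k (by omega)).aestronglyMeasurable))
    ((hcontk u k (by omega)).intervalIntegrable a b)
    ((hcontk u (k+1) hk1).aestronglyMeasurable)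
    (ae_of_all _ fun s hs x _ => ?_)
    (intervalIntegrable_const)
    (ae_of_all _ fun s hs x _ => ?_)).2
  · rw [norm_mul, norm_pow, Complex.norm_real]
    calc ‖g s‖^(k+1) * ‖cf P Y (k+1) (x * g s)‖
        ≤ 1^(k+1) * (∫ ω, |Y ω|^(k+1) ∂P) := by
          apply mul_le_mul (pow_le_pow_left₀ (norm_nonneg _) (hg1 s hs) (k+1))
            (cf_norm_le _) (norm_nonneg _) (by positivity)
      _ = _ := by ring
  · have h1 : HasDerivAt (fun x : ℝ => x * g s) (g s) x := hasDerivAt_mul_const (g s)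
    have h2 := (cf_hasDerivAt hY h3 hk (x * g s)).scomp x h1
    have h3' := h2.const_mul (((g s : ℂ))^k)
    simpa [pow_succ, Complex.real_smul, mul_comm, mul_assoc, mul_left_comm] using h3'

omit [IsProbabilityMeasure P] in
lemma cfInt_zero (a b : ℝ) (g : ℝ → ℝ) (k : ℕ) :
    cfInt P Y a b g k 0 = ((∫ s in a..b, (g s)^k : ℝ) : ℂ) * cf P Y k 0 := by
  have h : ∀ s, ((g s : ℂ))^k * cf P Y k (0 * g s) = (((g s)^k : ℝ) : ℂ) * cf P Y k 0 := by
    intro s; rw [zero_mul]; push_cast; ring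
  rw [cfInt]
  simp_rw [h]
  rw [intervalIntegral.integral_mul_const, ← intervalIntegral.integral_ofReal]

end CFlayer

lemma int_exp_mul' (r a b : ℝ) (hr : r ≠ 0) :
    ∫ s in a..b, Real.exp (r*s) = (Real.exp (r*b) - Real.exp (r*a))/r := by
  have h : ∀ s ∈ Set.uIcc a b, HasDerivAt (fun t => Real.exp (r*t)/r) (Real.exp (r*s)) s := by
    intro s _
    have := (((hasDerivAt_id s).const_mul r).exp).div_const r
    simpa [mul_comm, mul_div_assoc, mul_div_cancel_left₀ _ hr] using this
  rw [intervalIntegral.integral_eq_sub_of_hasDerivAt h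
    ((Real.continuous_exp.comp (continuous_const.mul continuous_id)).intervalIntegrable a b)]
  ring

lemma int_g_pow (α a b : ℝ) (hα : α ≠ 0) (k : ℕ) (hk : 1 ≤ k) :
    ∫ s in a..b, (Real.exp (-α*(b - s)))^k
      = (1 - Real.exp (-(k:ℝ)*α*(b-a)))/((k:ℝ)*α) := by
  have hk0 : (k:ℝ) ≠ 0 := by exact_mod_cast (Nat.one_le_iff_ne_zero.mp hk)
  have hkα : (k:ℝ)*α ≠ 0 := mul_ne_zero hk0 hα
  have h : ∀ s, (Real.exp (-α*(b - s)))^k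
      = Real.exp (-(k:ℝ)*α*b) * Real.exp ((k:ℝ)*α*s) := by
    intro s
    rw [← Real.exp_nat_mul, ← Real.exp_add]
    ring_nf
  simp_rw [h]
  rw [intervalIntegral.integral_const_mul, int_exp_mul' _ _ _ hkα]
  field_simp
  rw [mul_sub, ← Real.exp_add, ← Real.exp_add]
  ring_nf
  rw [Real.exp_zero]
set_option maxHeartbeats 1000000

/-- Third moment of the log-return of the mean-reverting jump-diffusion model. -/
theorem logReturn_third_moment {Ω Ωx : Type*} [MeasurableSpace Ω] [MeasurableSpace Ωx]
    (P : Measure Ω) (Px : Measure Ωx)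
    [IsProbabilityMeasure P] [IsProbabilityMeasure Px]
    (α Δ lam μ σ : ℝ) (j : ℕ) (hα : 0 < α) (hΔ : 0 < Δ) (hlam : 0 ≤ lam)
    (ξ : Ω → ℝ) (hξmeas : Measurable ξ)
    (φ : ℝ → ℂ)
    (hφ : ∀ u : ℝ, φ u = ∫ ω, Complex.exp (Complex.I * (u : ℂ) * (ξ ω : ℂ)) ∂P)
    (K₁ K₂ : ℝ → ℂ)
    (hK₁ : ∀ u : ℝ, K₁ u =
      ∫ s in ((j : ℝ) * Δ)..(((j : ℝ) + 1) * Δ), φ (u * Real.exp (-α * (((j : ℝ) + 1) * Δ - s))))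
    (hK₂ : ∀ u : ℝ, K₂ u =
      ∫ s in (0:ℝ)..((j : ℝ) * Δ),
        φ (u * (Real.exp (-α * Δ) - 1) * Real.exp (-α * ((j : ℝ) * Δ - s))))
    (E : ℕ → ℝ)
    (hE : ∀ k : ℕ, E k = (1 - Real.exp (-(k : ℝ) * α * Δ))
        + (-1 : ℝ) ^ k * (1 - Real.exp (-α * Δ)) ^ k * (1 - Real.exp (-(k : ℝ) * α * (j : ℝ) * Δ)))
    (T₁ : ℝ → ℂ)
    (hT₁ : ∀ u : ℝ, T₁ u = -((lam * ((j : ℝ) + 1) * Δ : ℝ) : ℂ)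
        + Complex.I * ((μ * Real.exp (-α * (j : ℝ) * Δ) * (1 - Real.exp (-α * Δ)) : ℝ) : ℂ) * (u : ℂ)
        - ((σ ^ 2 / (4 * α) * E 2 : ℝ) : ℂ) * (u : ℂ) ^ 2
        + ((lam : ℝ) : ℂ) * (K₁ u + K₂ u))
    (X : Ωx → ℝ) (hXmeas : Measurable X)
    (hchar : ∀ u : ℝ, ∫ ω, Complex.exp (Complex.I * (u : ℂ) * (X ω : ℂ)) ∂Px = Complex.exp (T₁ u))
    (hξint : Integrable (fun ω => |ξ ω| ^ 3) P)
    (hXint : Integrable (fun ω => |X ω| ^ 3) Px)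
    (m v : ℝ)
    (hm : m = μ * Real.exp (-α * (j : ℝ) * Δ) * (1 - Real.exp (-α * Δ))
        + lam / α * (∫ ω, ξ ω ∂P) * E 1)
    (hv : v = (lam * (∫ ω, ξ ω ^ 2 ∂P) + σ ^ 2) * E 2 / (2 * α)) :
    ∫ ω, X ω ^ 3 ∂Px
      = lam * (∫ ω, ξ ω ^ 3 ∂P) * E 3 / (3 * α) + 3 * m * v + m ^ 3 := by
  have hαne : α ≠ 0 := ne_of_gt hα
  set A : ℕ → ℝ → ℂ := fun k => cfInt P ξ ((j:ℝ)*Δ) (((j:ℝ)+1)*Δ)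
    (fun s => Real.exp (-α*((((j:ℝ)+1)*Δ) - s))) k with hA
  set B : ℕ → ℝ → ℂ := fun k => cfInt P ξ 0 ((j:ℝ)*Δ)
    (fun s => (Real.exp (-α*Δ) - 1) * Real.exp (-α*(((j:ℝ)*Δ) - s))) k with hB
  -- identification of φ, K₁, K₂
  have hφcf : φ = cf P ξ 0 := funext fun u => by rw [hφ]; simp [cf]
  have hK₁A : ∀ u, K₁ u = A 0 u := fun u => by
    rw [hK₁, hA]; simp only [cfInt, pow_zero, one_mul, hφcf]
  have hK₂B : ∀ u, K₂ u = B 0 u := fun u => by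
    rw [hK₂, hB]; simp only [cfInt, pow_zero, one_mul, hφcf, mul_assoc]
  -- bounds on the kernels
  have habΔ : (j:ℝ)*Δ ≤ ((j:ℝ)+1)*Δ := by nlinarith [hΔ.le]
  have hjΔ : (0:ℝ) ≤ (j:ℝ)*Δ := by positivity
  have hg₁b : ∀ s ∈ Set.uIoc ((j:ℝ)*Δ) (((j:ℝ)+1)*Δ),
      |Real.exp (-α*((((j:ℝ)+1)*Δ) - s))| ≤ 1 := by
    intro s hs
    rw [Set.uIoc_of_le habΔ] at hs
    rw [abs_of_pos (Real.exp_pos _)]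
    apply Real.exp_le_one_iff.mpr
    nlinarith [hs.2]
  have hexp1 : Real.exp (-α*Δ) ≤ 1 := by
    apply Real.exp_le_one_iff.mpr; nlinarith
  have hg₂b : ∀ s ∈ Set.uIoc (0:ℝ) ((j:ℝ)*Δ),
      |(Real.exp (-α*Δ) - 1) * Real.exp (-α*(((j:ℝ)*Δ) - s))| ≤ 1 := by
    intro s hs
    rw [Set.uIoc_of_le hjΔ] at hs
    rw [abs_mul, abs_of_pos (Real.exp_pos _)]
    have h1 : |Real.exp (-α*Δ) - 1| ≤ 1 := by
      rw [abs_le]; constructor <;> nlinarith [Real.exp_pos (-α*Δ)]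
    have h2 : Real.exp (-α*(((j:ℝ)*Δ) - s)) ≤ 1 := by
      apply Real.exp_le_one_iff.mpr; nlinarith [hs.2]
    exact mul_le_one₀ h1 (Real.exp_pos _).le h2
  have hg₁c : Continuous (fun s => Real.exp (-α*((((j:ℝ)+1)*Δ) - s))) :=
    Real.continuous_exp.comp (continuous_const.mul (continuous_const.sub continuous_id))
  have hg₂c : Continuous (fun s => (Real.exp (-α*Δ) - 1) * Real.exp (-α*(((j:ℝ)*Δ) - s))) :=
    continuous_const.mul
      (Real.continuous_exp.comp (continuous_const.mul (continuous_const.sub continuous_id)))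
  have hAd : ∀ (k:ℕ), k ≤ 2 → ∀ u, HasDerivAt (A k) (A (k+1) u) u := fun k hk u => by
    rw [hA]; exact cfInt_hasDerivAt hξmeas hξint hg₁c hg₁b hk u
  have hBd : ∀ (k:ℕ), k ≤ 2 → ∀ u, HasDerivAt (B k) (B (k+1) u) u := fun k hk u => by
    rw [hB]; exact cfInt_hasDerivAt hξmeas hξint hg₂c hg₂b hk u
  -- T₁ in terms of A, B
  have hTf : T₁ = fun (u:ℝ) => -((lam * ((j:ℝ)+1) * Δ : ℝ):ℂ)
      + Complex.I * ((μ * Real.exp (-α*(j:ℝ)*Δ) * (1 - Real.exp (-α*Δ)) : ℝ):ℂ) * (u:ℂ)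
      - ((σ^2/(4*α) * E 2 : ℝ):ℂ) * (u:ℂ)^2 + ((lam:ℝ):ℂ) * (A 0 u + B 0 u) :=
    funext fun u => by rw [hT₁ u, hK₁A u, hK₂B u]
  set cmr : ℂ := ((μ * Real.exp (-α*(j:ℝ)*Δ) * (1 - Real.exp (-α*Δ)) : ℝ):ℂ) with hcmr
  set cσ : ℂ := ((σ^2/(4*α) * E 2 : ℝ):ℂ) with hcσ
  set S1 : ℝ → ℂ := fun u => Complex.I * cmr - cσ * (2*(u:ℂ)) + ((lam:ℝ):ℂ) * (A 1 u + B 1 u)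
    with hS1def
  set S2 : ℝ → ℂ := fun u => -(cσ * 2) + ((lam:ℝ):ℂ) * (A 2 u + B 2 u) with hS2def
  set S3 : ℝ → ℂ := fun u => ((lam:ℝ):ℂ) * (A 3 u + B 3 u) with hS3def
  have hTd : ∀ u, HasDerivAt T₁ (S1 u) u := by
    intro u
    rw [hTf]
    have hlin : HasDerivAt (fun y:ℝ => Complex.I * cmr * (y:ℂ)) (Complex.I * cmr) u := by
      simpa using ((hasDerivAt_id ((u:ℝ):ℂ)).const_mul (Complex.I*cmr)).comp_ofReal
    have hquad : HasDerivAt (fun y:ℝ => cσ * (y:ℂ)^2) (cσ * (2*(u:ℂ))) u := by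
      have := ((hasDerivAt_pow 2 ((u:ℝ):ℂ)).const_mul cσ).comp_ofReal
      simpa [pow_one] using this
    have hjump : HasDerivAt (fun y => ((lam:ℝ):ℂ) * (A 0 y + B 0 y))
        (((lam:ℝ):ℂ) * (A 1 u + B 1 u)) u :=
      ((hAd 0 (by omega) u).add (hBd 0 (by omega) u)).const_mul _
    have hcomb := (((hasDerivAt_const u (-((lam * ((j:ℝ)+1) * Δ : ℝ):ℂ))).add hlin).sub
      hquad).add hjump
    have hval : S1 u = 0 + Complex.I * cmr - cσ * (2*(u:ℂ)) + ((lam:ℝ):ℂ) * (A 1 u + B 1 u) := by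
      rw [hS1def]; ring
    rw [hval]; exact hcomb
  have hS1d : ∀ u, HasDerivAt S1 (S2 u) u := by
    intro u
    rw [hS1def]
    have hlin : HasDerivAt (fun y:ℝ => cσ * (2*(y:ℂ))) (cσ * 2) u := by
      simpa [mul_assoc] using ((hasDerivAt_id ((u:ℝ):ℂ)).const_mul (cσ*2)).comp_ofReal
    have hjump : HasDerivAt (fun y => ((lam:ℝ):ℂ) * (A 1 y + B 1 y))
        (((lam:ℝ):ℂ) * (A 2 u + B 2 u)) u :=
      ((hAd 1 (by omega) u).add (hBd 1 (by omega) u)).const_mul _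
    have hcomb := ((hasDerivAt_const u (Complex.I * cmr)).sub hlin).add hjump
    have hval : S2 u = 0 - cσ * 2 + ((lam:ℝ):ℂ) * (A 2 u + B 2 u) := by
      rw [hS2def]; ring
    rw [hval]; exact hcomb
  have hS2d : ∀ u, HasDerivAt S2 (S3 u) u := by
    intro u
    rw [hS2def]
    have hjump : HasDerivAt (fun y => ((lam:ℝ):ℂ) * (A 2 y + B 2 y))
        (((lam:ℝ):ℂ) * (A 3 u + B 3 u)) u :=
      ((hAd 2 (by omega) u).add (hBd 2 (by omega) u)).const_mul _
    have hcomb := (hasDerivAt_const u (-(cσ * 2))).add hjump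
    have hval : S3 u = 0 + ((lam:ℝ):ℂ) * (A 3 u + B 3 u) := by rw [hS3def]; ring
    rw [hval]; exact hcomb
  -- X side
  have hXd : ∀ (k:ℕ), k ≤ 2 → ∀ u, HasDerivAt (cf Px X k) (cf Px X (k+1) u) u :=
    fun k hk u => cf_hasDerivAt hXmeas hXint hk u
  have hψ0 : cf Px X 0 = fun u => Complex.exp (T₁ u) := funext fun u => by
    simpa [cf] using hchar u
  have h1 : ∀ u, cf Px X 1 u = Complex.exp (T₁ u) * S1 u := by
    intro u
    have hL := hXd 0 (by omega) u
    rw [hψ0] at hL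
    exact hL.unique ((hTd u).cexp)
  have h2 : ∀ u, cf Px X 2 u
      = Complex.exp (T₁ u) * S1 u * S1 u + Complex.exp (T₁ u) * S2 u := by
    intro u
    have hL := hXd 1 (by omega) u
    rw [funext h1] at hL
    exact hL.unique (((hTd u).cexp).mul (hS1d u))
  have h3 : cf Px X 3 0
      = (Complex.exp (T₁ 0) * S1 0 * S1 0 + Complex.exp (T₁ 0) * S2 0) * S1 0
        + Complex.exp (T₁ 0) * S1 0 * S2 0
        + (Complex.exp (T₁ 0) * S1 0 * S2 0 + Complex.exp (T₁ 0) * S3 0) := by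
    have hL := hXd 2 (by omega) 0
    rw [funext h2] at hL
    have hR := ((((hTd 0).cexp).mul (hS1d 0)).mul (hS1d 0)).add
      (((hTd 0).cexp).mul (hS2d 0))
    exact hL.unique hR
  -- evaluations at zero
  have hcfξ0 : cf P ξ 0 0 = 1 := by
    rw [cf_zero]; simp
  have hcfX3 : cf Px X 3 0 = Complex.I^3 * ((∫ ω, X ω^3 ∂Px : ℝ):ℂ) := cf_zero
  have hA00 : A 0 0 = ((Δ:ℝ):ℂ) := by
    simp only [hA]
    rw [cfInt_zero, hcfξ0]
    simp only [pow_zero, intervalIntegral.integral_const, smul_eq_mul, mul_one]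
    norm_num
    ring
  have hB00 : B 0 0 = (((j:ℝ)*Δ : ℝ):ℂ) := by
    simp only [hB]
    rw [cfInt_zero, hcfξ0]
    simp only [pow_zero, intervalIntegral.integral_const, smul_eq_mul, mul_one, sub_zero]
  have hT₁0 : T₁ 0 = 0 := by
    rw [hTf]
    simp only [hA00, hB00, Complex.ofReal_zero, mul_zero, ne_eq, OfNat.ofNat_ne_zero,
      not_false_eq_true, zero_pow, sub_zero, add_zero]
    push_cast
    ring
  have hAk0 : ∀ (k:ℕ), 1 ≤ k → A k 0
      = (((1 - Real.exp (-(k:ℝ)*α*Δ))/((k:ℝ)*α) : ℝ):ℂ)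
        * (Complex.I^k * ((∫ ω, ξ ω^k ∂P : ℝ):ℂ)) := by
    intro k hk
    simp only [hA]
    rw [cfInt_zero, cf_zero, int_g_pow α _ _ hαne k hk]
    rw [show ((j:ℝ)+1)*Δ - (j:ℝ)*Δ = Δ by ring]
  have hBk0 : ∀ (k:ℕ), 1 ≤ k → B k 0
      = (((Real.exp (-α*Δ) - 1)^k * ((1 - Real.exp (-(k:ℝ)*α*((j:ℝ)*Δ)))/((k:ℝ)*α)) : ℝ):ℂ)
        * (Complex.I^k * ((∫ ω, ξ ω^k ∂P : ℝ):ℂ)) := by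
    intro k hk
    simp only [hB]
    rw [cfInt_zero, cf_zero]
    simp only [mul_pow]
    rw [intervalIntegral.integral_const_mul, int_g_pow α _ _ hαne k hk, sub_zero]
  have hS1v : S1 0 = Complex.I * ((m:ℝ):ℂ) := by
    simp only [hS1def]
    rw [hAk0 1 le_rfl, hBk0 1 le_rfl, hm, hE 1, hcmr]
    push_cast
    ring_nf
  have hS2v : S2 0 = -((v:ℝ):ℂ) := by
    simp only [hS2def]
    rw [hAk0 2 one_le_two, hBk0 2 one_le_two, hv, hcσ, hE 2, Complex.I_sq]
    push_cast
    ring_nf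
  have hS3v : S3 0 = -(Complex.I * ((lam * (∫ ω, ξ ω^3 ∂P) * E 3 / (3*α) : ℝ):ℂ)) := by
    simp only [hS3def]
    rw [hAk0 3 (by omega), hBk0 3 (by omega), hE 3,
      show (Complex.I:ℂ)^3 = -Complex.I by rw [pow_succ, Complex.I_sq]; ring]
    push_cast
    ring_nf
  rw [hT₁0, Complex.exp_zero, hS1v, hS2v, hS3v, hcfX3] at h3
  have key : ((∫ ω, X ω^3 ∂Px : ℝ):ℂ)
      = ((lam * (∫ ω, ξ ω^3 ∂P) * E 3 / (3*α) + 3*m*v + m^3 : ℝ):ℂ) := by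
    apply mul_left_cancel₀ (pow_ne_zero 3 Complex.I_ne_zero)
    rw [h3]
    push_cast
    linear_combination (-(Complex.I * (((lam:ℂ) * ((∫ ω, ξ ω^3 ∂P : ℝ):ℂ) * ((E 3:ℝ):ℂ) / (3*(α:ℂ)))
      + 3*((m:ℝ):ℂ)*((v:ℝ):ℂ)))) * Complex.I_sq
  exact_mod_cast key
end

section
/- Let R > 1, K > 0 and S₀ > 0, and set k = log K and x₀ = log S₀. Then the function y ↦ e^{−Ry} max(S₀ e^y − K, 0) is integrable on ℝ, and for every real x its Fourier transform satisfies ∫_ℝ e^{ixy} e^{−Ry} max(S₀ e^y − K, 0) dy = K e^{(ix−R)(k−x₀)} ( 1/(ix−R) − 1/(ix−R+1) ). -/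
open MeasureTheory Set Filter

lemma cexp_integrableOn_Ioi (a : ℝ) {c : ℂ} (hc : c.re < 0) :
    IntegrableOn (fun y : ℝ => Complex.exp (c * y)) (Set.Ioi a) := by
  have h : IntegrableOn (fun y : ℝ => Real.exp (-(-c.re) * y)) (Set.Ioi a) :=
    exp_neg_integrableOn_Ioi a (by linarith)
  refine h.mono' ((Complex.continuous_exp.comp (by continuity)).aestronglyMeasurable) ?_
  filter_upwards with y
  simp [Complex.norm_exp]

lemma cexp_integral_Ioi (a : ℝ) {c : ℂ} (hc : c.re < 0) :
    ∫ y : ℝ in Set.Ioi a, Complex.exp (c * y) = -Complex.exp (c * a) / c := by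
  have hc0 : c ≠ 0 := fun h => by simp [h] at hc
  have hderiv : ∀ y ∈ Set.Ici a, HasDerivAt (fun y : ℝ => Complex.exp (c * y) / c)
      (Complex.exp (c * y)) y := by
    intro y _
    have h1 : HasDerivAt (fun y : ℝ => c * (y : ℂ)) c y := by
      simpa using (Complex.ofRealCLM.hasDerivAt (x := y)).const_mul c
    have h2 := (h1.cexp).div_const c
    rw [mul_div_cancel_right₀ _ hc0] at h2
    exact h2
  have htend : Tendsto (fun y : ℝ => Complex.exp (c * y) / c) atTop (nhds 0) := by
    rw [tendsto_zero_iff_norm_tendsto_zero]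
    have heq : (fun y : ℝ => ‖Complex.exp (c * y) / c‖)
        = fun y : ℝ => Real.exp (c.re * y) / ‖c‖ := by
      ext y; simp [Complex.norm_exp]
    rw [heq]
    have h3 : Tendsto (fun y : ℝ => Real.exp (c.re * y)) atTop (nhds 0) :=
      Real.tendsto_exp_atBot.comp
        (tendsto_id.const_mul_atTop_of_neg hc (f := fun y : ℝ => y))
    simpa using h3.div_const ‖c‖
  have := integral_Ioi_of_hasDerivAt_of_tendsto' hderiv (cexp_integrableOn_Ioi a hc) htend
  rw [this]; ring

open MeasureTheory

/-- The damped call payoff `y ↦ e^{−Ry} max(S₀e^y − K, 0)` is integrable and its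
Fourier transform is `K e^{(ix−R)(k−x₀)} (1/(ix−R) − 1/(ix−R+1))`,
where `k = log K` and `x₀ = log S₀`. -/
theorem damped_call_payoff_fourier (R K S₀ : ℝ) (hR : 1 < R) (hK : 0 < K) (hS₀ : 0 < S₀)
    (k x₀ : ℝ) (hk : k = Real.log K) (hx₀ : x₀ = Real.log S₀) :
    Integrable (fun y : ℝ => Real.exp (-R * y) * max (S₀ * Real.exp y - K) 0) ∧
    ∀ x : ℝ,
      ∫ y : ℝ, Complex.exp (Complex.I * (x : ℂ) * (y : ℂ))
          * ((Real.exp (-R * y) * max (S₀ * Real.exp y - K) 0 : ℝ) : ℂ)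
        = (K : ℂ) * Complex.exp ((Complex.I * (x : ℂ) - (R : ℂ)) * ((k : ℂ) - (x₀ : ℂ)))
            * (1 / (Complex.I * (x : ℂ) - (R : ℂ))
              - 1 / (Complex.I * (x : ℂ) - (R : ℂ) + 1)) := by
  set a : ℝ := k - x₀ with ha
  have hea : Real.exp a = K / S₀ := by
    rw [ha, hk, hx₀, Real.exp_sub, Real.exp_log hK, Real.exp_log hS₀]
  have hKa : S₀ * Real.exp a = K := by rw [hea]; field_simp
  have hmax : ∀ y ∈ Set.Ioi a, max (S₀ * Real.exp y - K) 0 = S₀ * Real.exp y - K := by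
    intro y hy
    have h := Real.exp_lt_exp.2 (Set.mem_Ioi.1 hy)
    have : K < S₀ * Real.exp y := by nlinarith [Real.exp_pos a, Real.exp_pos y]
    exact max_eq_left (by linarith)
  have hmax0 : ∀ y ∉ Set.Ioi a, max (S₀ * Real.exp y - K) 0 = 0 := by
    intro y hy
    have h := Real.exp_le_exp.2 (le_of_not_gt hy)
    have : S₀ * Real.exp y ≤ K := by nlinarith [Real.exp_pos a, Real.exp_pos y]
    exact max_eq_right (by linarith)
  have hfun : (fun y : ℝ => Real.exp (-R * y) * max (S₀ * Real.exp y - K) 0)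
      = Set.indicator (Set.Ioi a)
        (fun y : ℝ => Real.exp (-R * y) * (S₀ * Real.exp y - K)) := by
    ext y
    by_cases hy : y ∈ Set.Ioi a
    · rw [Set.indicator_of_mem hy, hmax y hy]
    · rw [Set.indicator_of_notMem hy, hmax0 y hy, mul_zero]
  have h1 : IntegrableOn (fun y : ℝ => Real.exp (-R * y) * (S₀ * Real.exp y - K))
      (Set.Ioi a) := by
    have e1 : IntegrableOn (fun y : ℝ => Real.exp (-(R - 1) * y)) (Set.Ioi a) :=
      exp_neg_integrableOn_Ioi a (by linarith)
    have e2 : IntegrableOn (fun y : ℝ => Real.exp (-R * y)) (Set.Ioi a) :=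
      exp_neg_integrableOn_Ioi a (by linarith)
    have h2 : IntegrableOn
        (fun y : ℝ => S₀ * Real.exp (-(R - 1) * y) - K * Real.exp (-R * y))
        (Set.Ioi a) := (e1.const_mul S₀).sub (e2.const_mul K)
    refine h2.congr_fun (fun y _ => ?_) measurableSet_Ioi
    beta_reduce
    rw [show -(R - 1) * y = -R * y + y by ring, Real.exp_add]
    ring
  have hint : Integrable (fun y : ℝ => Real.exp (-R * y) * max (S₀ * Real.exp y - K) 0) := by
    rw [hfun]
    exact (integrable_indicator_iff measurableSet_Ioi).2 h1
  refine ⟨hint, fun x => ?_⟩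
  set c : ℂ := Complex.I * (x : ℂ) - (R : ℂ) with hc
  have hcre : c.re = -R := by simp [hc]
  have hcre' : (c + 1).re = 1 - R := by simp [hc]; ring
  have hc0 : c ≠ 0 := fun h => by rw [h] at hcre; simp at hcre; linarith
  have hc1 : c + 1 ≠ 0 := fun h => by rw [h] at hcre'; simp at hcre'; linarith
  have hrw : ∫ y : ℝ, Complex.exp (Complex.I * (x : ℂ) * (y : ℂ))
      * ((Real.exp (-R * y) * max (S₀ * Real.exp y - K) 0 : ℝ) : ℂ)
      = ∫ y : ℝ in Set.Ioi a,
        (S₀ : ℂ) * Complex.exp ((c + 1) * y) - (K : ℂ) * Complex.exp (c * y) := by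
    rw [← integral_indicator measurableSet_Ioi]
    congr 1
    ext y
    by_cases hy : y ∈ Set.Ioi a
    · rw [Set.indicator_of_mem hy, hmax y hy]
      push_cast
      rw [show (c + 1) * (y : ℂ) = Complex.I * x * y + (-(R : ℂ) * y + y) by rw [hc]; ring,
        show c * (y : ℂ) = Complex.I * x * y + -(R : ℂ) * y by rw [hc]; ring]
      simp only [Complex.exp_add]
      ring
    · rw [Set.indicator_of_notMem hy, hmax0 y hy]
      simp
  rw [hrw]
  have i1 : IntegrableOn (fun y : ℝ => (S₀ : ℂ) * Complex.exp ((c + 1) * y)) (Set.Ioi a) :=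
    (cexp_integrableOn_Ioi a (by rw [hcre']; linarith)).const_mul _
  have i2 : IntegrableOn (fun y : ℝ => (K : ℂ) * Complex.exp (c * y)) (Set.Ioi a) :=
    (cexp_integrableOn_Ioi a (by rw [hcre]; linarith)).const_mul _
  rw [integral_sub i1 i2, integral_const_mul, integral_const_mul,
    cexp_integral_Ioi a (show ((c + 1)).re < 0 by rw [hcre']; linarith),
    cexp_integral_Ioi a (show c.re < 0 by rw [hcre]; linarith)]
  have key : Complex.exp ((c + 1) * a) = (K / S₀ : ℝ) * Complex.exp (c * a) := by
    rw [add_mul, one_mul, Complex.exp_add, mul_comm]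
    congr 1
    rw [← Complex.ofReal_exp, hea]
  have hS₀' : (S₀ : ℂ) ≠ 0 := by exact_mod_cast hS₀.ne'
  rw [key]
  have hax : ((k : ℂ) - (x₀ : ℂ)) = (a : ℂ) := by push_cast [ha]; ring
  rw [hax]
  push_cast
  field_simp
  ring
end

section
/- Let ν be a probability measure on ℝ, R > 1, K > 0 and S₀ > 0, and suppose ∫_ℝ e^{Ry} dν(y) < ∞. Define H(y) = max(S₀ e^y − K, 0), H_R(y) = e^{−Ry} H(y) and Ĥ_R(x) = ∫_ℝ e^{ixy} H_R(y) dy, and assume that Ĥ_R is integrable on ℝ. Then ∫_ℝ H(y) dν(y) = (1/(2π)) ∫_ℝ ( ∫_ℝ e^{(R − ix) y} dν(y) ) Ĥ_R(x) dx. -/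
open MeasureTheory Real FourierTransform

/-- Fourier pricing representation for the call payoff: if `ν` is a probability
measure on `ℝ` with `∫ e^{Ry} dν < ∞` and the Fourier transform `Ĥ_R` of the
damped payoff is integrable, then
`∫ H dν = (1/2π) ∫ (∫ e^{(R−ix)y} dν(y)) Ĥ_R(x) dx`. -/
theorem call_price_fourier_representation (ν : Measure ℝ) [IsProbabilityMeasure ν]
    (R K S₀ : ℝ) (hR : 1 < R) (hK : 0 < K) (hS₀ : 0 < S₀)
    (hexp : Integrable (fun y : ℝ => Real.exp (R * y)) ν)
    (H HR : ℝ → ℝ) (FHR : ℝ → ℂ)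
    (hH : ∀ y, H y = max (S₀ * Real.exp y - K) 0)
    (hHR : ∀ y, HR y = Real.exp (-R * y) * H y)
    (hFHR : ∀ x : ℝ, FHR x = ∫ y : ℝ, Complex.exp (Complex.I * (x : ℂ) * (y : ℂ)) * ((HR y : ℝ) : ℂ))
    (hFint : Integrable FHR) :
    ((∫ y, H y ∂ν : ℝ) : ℂ)
      = ((1 / (2 * Real.pi) : ℝ) : ℂ)
        * ∫ x : ℝ, (∫ y, Complex.exp (((R : ℂ) - Complex.I * (x : ℂ)) * (y : ℂ)) ∂ν) * FHR x := by
  have hπ : (0:ℝ) < π := Real.pi_pos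
  set y₀ : ℝ := Real.log (K / S₀) with hy₀
  set g : ℝ → ℂ := fun y => (HR y : ℂ) with hg
  -- continuity
  have hHcont : Continuous H := by
    have : H = fun y => max (S₀ * Real.exp y - K) 0 := funext hH
    rw [this]; fun_prop
  have hHRcont : Continuous HR := by
    have : HR = fun y => Real.exp (-R * y) * H y := funext hHR
    rw [this]; fun_prop
  have hgcont : Continuous g := Complex.continuous_ofReal.comp hHRcont
  -- nonnegativity and bounds
  have hHnn : ∀ y, 0 ≤ H y := fun y => (hH y) ▸ le_max_right _ _
  have hHRle : ∀ y, ‖HR y‖ ≤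
      Set.indicator (Set.Ioi y₀) (fun y => S₀ * Real.exp (-(R-1) * y)) y := by
    intro y
    have hHRnn : 0 ≤ HR y := by rw [hHR]; exact mul_nonneg (Real.exp_nonneg _) (hHnn y)
    rw [Real.norm_of_nonneg hHRnn]
    by_cases hy : y ∈ Set.Ioi y₀
    · rw [Set.indicator_of_mem hy]
      have : H y ≤ S₀ * Real.exp y := by
        rw [hH]; apply max_le _ (by positivity); linarith
      calc HR y = Real.exp (-R * y) * H y := hHR y
        _ ≤ Real.exp (-R * y) * (S₀ * Real.exp y) := by
            exact mul_le_mul_of_nonneg_left this (Real.exp_nonneg _)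
        _ = S₀ * Real.exp (-(R-1) * y) := by
            rw [show -(R-1) * y = y + -R * y by ring, Real.exp_add]; ring
    · rw [Set.indicator_of_notMem hy]
      simp only [Set.mem_Ioi, not_lt] at hy
      have h1 : S₀ * Real.exp y ≤ K := by
        have := Real.exp_le_exp.2 hy
        rw [hy₀, Real.exp_log (by positivity)] at this
        calc S₀ * Real.exp y ≤ S₀ * (K / S₀) := by nlinarith [Real.exp_pos y]
          _ = K := by field_simp
      rw [hHR, hH, max_eq_right (by linarith)]
      simp
  have hbound : Integrable (Set.indicator (Set.Ioi y₀)
      (fun y => S₀ * Real.exp (-(R-1) * y))) := by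
    apply IntegrableOn.integrable_indicator _ measurableSet_Ioi
    exact ((exp_neg_integrableOn_Ioi y₀ (by linarith : (0:ℝ) < R - 1)).const_mul S₀)
  have hHRint : Integrable HR :=
    hbound.mono' hHRcont.aestronglyMeasurable (Filter.Eventually.of_forall hHRle)
  have hgint : Integrable g := hHRint.ofReal
  -- FHR in terms of the Fourier transform of g
  have key : ∀ x : ℝ, FHR x = 𝓕 g (-(x / (2*π))) := by
    intro x
    rw [hFHR, Real.fourier_real_eq_integral_exp_smul]
    congr 1; ext y
    have h1 : (-2 * π * y * (-(x / (2*π))) : ℝ) = y * x := by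
      field_simp
    rw [h1, smul_eq_mul]
    congr 1
    push_cast
    ring
  have hFg : 𝓕 g = fun w => FHR (-(2*π) * w) := by
    ext w
    rw [key]
    congr 1
    field_simp
  have hFgint : Integrable (𝓕 g) := by
    rw [hFg]
    exact hFint.comp_mul_left' (neg_ne_zero.2 (by positivity))
  -- Fourier inversion: g y = (1/2π) ∫ e^{-ixy} FHR x dx
  have hinv := hgcont.fourierInv_fourier_eq hgint hFgint
  have hg_eq : ∀ y : ℝ, (HR y : ℂ) = ((1/(2*π) : ℝ))
      • ∫ x : ℝ, Complex.exp (-(Complex.I * (x:ℂ) * (y:ℂ))) * FHR x := by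
    intro y
    have h1 : (HR y : ℂ) = 𝓕⁻ (𝓕 g) y := by rw [hinv]
    rw [h1, Real.fourierInv_eq']
    have h2 : ∀ v : ℝ, Complex.exp (((2 * π * (inner ℝ v y : ℝ) : ℝ) : ℂ) * Complex.I) • 𝓕 g v
        = (fun x : ℝ => Complex.exp (-(Complex.I * (x:ℂ) * (y:ℂ))) * FHR x) (-(2*π) * v) := by
      intro v
      rw [hFg, smul_eq_mul]
      congr 1
      simp only [RCLike.inner_apply, starRingEnd_apply, star_trivial]
      push_cast
      ring_nf
    calc (∫ v : ℝ, Complex.exp (((2 * π * (inner ℝ v y : ℝ) : ℝ) : ℂ) * Complex.I) • 𝓕 g v)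
        = ∫ v : ℝ, (fun x : ℝ => Complex.exp (-(Complex.I * (x:ℂ) * (y:ℂ))) * FHR x) (-(2*π) * v) := by
          congr 1; ext v; exact h2 v
      _ = |(-(2*π) : ℝ)⁻¹| • ∫ x : ℝ, Complex.exp (-(Complex.I * (x:ℂ) * (y:ℂ))) * FHR x :=
          MeasureTheory.Measure.integral_comp_mul_left
            (fun x : ℝ => Complex.exp (-(Complex.I * (x:ℂ) * (y:ℂ))) * FHR x) (-(2*π))
      _ = ((1/(2*π) : ℝ)) • ∫ x : ℝ, Complex.exp (-(Complex.I * (x:ℂ) * (y:ℂ))) * FHR x := by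
          congr 1
          rw [abs_inv, abs_neg, abs_of_pos (by positivity)]
          field_simp
  -- Fubini setup
  have hFmeas : AEStronglyMeasurable
      (Function.uncurry fun (y x : ℝ) =>
        Complex.exp (((R : ℂ) - Complex.I * (x:ℂ)) * (y:ℂ)) * FHR x) (ν.prod volume) := by
    apply AEStronglyMeasurable.mul
    · apply Continuous.aestronglyMeasurable
      fun_prop
    · exact hFint.aestronglyMeasurable.comp_snd
  have hFub : Integrable
      (Function.uncurry fun (y x : ℝ) =>
        Complex.exp (((R : ℂ) - Complex.I * (x:ℂ)) * (y:ℂ)) * FHR x) (ν.prod volume) := by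
    apply Integrable.mono' (hexp.mul_prod hFint.norm) hFmeas
    apply Filter.Eventually.of_forall
    rintro ⟨y, x⟩
    simp only [Function.uncurry, norm_mul, Complex.norm_exp]
    have : (((R : ℂ) - Complex.I * (x:ℂ)) * (y:ℂ)).re = R * y := by
      simp [Complex.sub_re, Complex.mul_re]
    rw [this]
  -- main computation
  have h0 : ((∫ y, H y ∂ν : ℝ) : ℂ) = ∫ y, ((H y : ℝ) : ℂ) ∂ν :=
    (integral_ofReal (𝕜 := ℂ)).symm
  rw [h0]
  have step1 : ∀ y : ℝ, ((H y : ℝ) : ℂ)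
      = Complex.exp ((R : ℂ) * (y : ℂ)) * (HR y : ℂ) := by
    intro y
    have : H y = Real.exp (R * y) * HR y := by
      rw [hHR, ← mul_assoc, ← Real.exp_add]
      norm_num
    rw [this]
    push_cast [Complex.ofReal_exp]
    ring
  calc (∫ y, ((H y : ℝ) : ℂ) ∂ν)
      = ∫ y, Complex.exp ((R:ℂ) * (y:ℂ)) * ((1/(2*π) : ℝ)
          • ∫ x : ℝ, Complex.exp (-(Complex.I * (x:ℂ) * (y:ℂ))) * FHR x) ∂ν := by
        congr 1; ext y; rw [step1 y, hg_eq y]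
    _ = ((1/(2*π) : ℝ)) • ∫ y, ∫ x : ℝ,
          Complex.exp (((R : ℂ) - Complex.I * (x:ℂ)) * (y:ℂ)) * FHR x ∂volume ∂ν := by
        rw [← integral_smul]
        congr 1; ext y
        rw [mul_smul_comm]
        congr 1
        rw [← integral_const_mul]
        congr 1; ext x
        rw [← mul_assoc, ← Complex.exp_add]
        congr 2
        ring
    _ = ((1/(2*π) : ℝ)) • ∫ x : ℝ, ∫ y,
          Complex.exp (((R : ℂ) - Complex.I * (x:ℂ)) * (y:ℂ)) * FHR x ∂ν ∂volume := by
        congr 1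
        exact integral_integral_swap hFub
    _ = ((1 / (2 * Real.pi) : ℝ) : ℂ)
        * ∫ x : ℝ, (∫ y, Complex.exp (((R : ℂ) - Complex.I * (x : ℂ)) * (y : ℂ)) ∂ν) * FHR x := by
        rw [Complex.real_smul]
        congr 1
        congr 1; ext x
        exact integral_mul_const _ _
end
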